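/- arXiv:1509.08813 — 8 statements merged into one kernel-verified Lean document; each statement's English description precedes it below -/
import Mathlib

section
/- For a dynamical system (X,T), the following conditions are equivalent: (1) (X,T) is weakly mixing; (2) there is a dense subset X' ⊆ X such that x ∈ ω_{N_T}(x) for every x ∈ X'; (3) ω_{N_T}(x₀) = X for some point x₀ ∈ X; (4) there is a dense Gδ subset X'' ⊆ X such that ω_{N_T}(x) = X for every x ∈ X''. -/
open Filter Topology Set Metric

section Defs

variable {X : Type*}

/-- A set is "opene" if it is open and nonempty. -/
def Opene [TopologicalSpace X] (U : Set X) : Prop := IsOpen U ∧ U.Nonempty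

/-- `N_T(U,V) = {n ∈ ℕ : U ∩ T⁻ⁿV ≠ ∅}`. -/
def NTset (T : X → X) (U V : Set X) : Set ℕ := {n | (U ∩ T^[n] ⁻¹' V).Nonempty}

/-- `N_T(x,G) = {n ∈ ℕ : Tⁿx ∈ G}`. -/
def NTpt (T : X → X) (x : X) (G : Set X) : Set ℕ := {n | T^[n] x ∈ G}

/-- `ω_{N_T}(x)`. -/
def omegaNT [TopologicalSpace X] (T : X → X) (x : X) : Set X :=
  {z | ∀ G : Set X, IsOpen G → z ∈ G → ∀ U V : Set X, Opene U → Opene V →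
    (NTpt T x G ∩ NTset T U V).Nonempty}

/-- The ω-limit set `ω_T(x)`. -/
def omegaT [TopologicalSpace X] (T : X → X) (x : X) : Set X :=
  {z | ∀ G : Set X, IsOpen G → z ∈ G → (NTpt T x G).Infinite}

/-- Transitive compact system. -/
def TransCompact [TopologicalSpace X] (T : X → X) : Prop :=
  ∀ x : X, (omegaNT T x).Nonempty

/-- Topologically transitive system. -/
def TopTransitive [TopologicalSpace X] (T : X → X) : Prop :=
  ∀ U V : Set X, Opene U → Opene V → (NTset T U V).Nonempty

/-- Weakly mixing: the product system `(X×X, T×T)` is topologically transitive. -/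
def WeaklyMixing [TopologicalSpace X] (T : X → X) : Prop :=
  TopTransitive (fun p : X × X => (T p.1, T p.2))

/-- Totally transitive: `(X, T^k)` is transitive for every `k ≥ 1`. -/
def TotallyTransitive [TopologicalSpace X] (T : X → X) : Prop :=
  ∀ k : ℕ, 1 ≤ k → TopTransitive (T^[k])

/-- Minimal system: every point has dense orbit. -/
def MinimalSystem [TopologicalSpace X] (T : X → X) : Prop :=
  ∀ x : X, Dense (Set.range fun n : ℕ => T^[n] x)

/-- A minimal subset: nonempty, closed, `T M = M`, with no proper nonempty closed invariant subset. -/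
def IsMinimalSubset [TopologicalSpace X] (T : X → X) (M : Set X) : Prop :=
  M.Nonempty ∧ IsClosed M ∧ T '' M = M ∧
    ∀ M' : Set X, M' ⊆ M → M'.Nonempty → IsClosed M' → T '' M' = M' → M' = M

/-- A minimal point: one that lies in some minimal subset. -/
def IsMinimalPoint [TopologicalSpace X] (T : X → X) (x : X) : Prop :=
  ∃ M : Set X, IsMinimalSubset T M ∧ x ∈ M

/-- An M-system: transitive with a dense set of minimal points. -/
def MSystem [TopologicalSpace X] (T : X → X) : Prop :=
  TopTransitive T ∧ Dense {x : X | IsMinimalPoint T x}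

/-- Thick subset of ℕ. -/
def ThickSet (S : Set ℕ) : Prop := ∀ N : ℕ, ∃ m : ℕ, ∀ i ≤ N, m + i ∈ S

/-- Syndetic subset of ℕ. -/
def SyndeticSet (S : Set ℕ) : Prop := ∃ N : ℕ, ∀ i : ℕ, ∃ j ≤ N, i + j ∈ S

/-- Thickly syndetic subset of ℕ. -/
def ThicklySyndeticSet (S : Set ℕ) : Prop :=
  ∀ N : ℕ, SyndeticSet {m : ℕ | ∀ i ≤ N, m + i ∈ S}

/-- `S_T(U,δ)`. -/
def STset [MetricSpace X] (T : X → X) (U : Set X) (δ : ℝ) : Set ℕ :=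
  {n | ∃ x ∈ U, ∃ y ∈ U, δ < dist (T^[n] x) (T^[n] y)}

/-- Thickly sensitive system. -/
def ThicklySensitive [MetricSpace X] (T : X → X) : Prop :=
  ∃ δ : ℝ, 0 < δ ∧ ∀ U : Set X, Opene U → ThickSet (STset T U δ)

/-- Thickly syndetically sensitive system. -/
def ThicklySyndeticallySensitive [MetricSpace X] (T : X → X) : Prop :=
  ∃ δ : ℝ, 0 < δ ∧ ∀ U : Set X, Opene U → ThicklySyndeticSet (STset T U δ)

/-- Multi-sensitive system. -/
def MultiSensitive [MetricSpace X] (T : X → X) : Prop :=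
  ∃ δ : ℝ, 0 < δ ∧ ∀ (k : ℕ) (U : Fin (k + 1) → Set X), (∀ i, Opene (U i)) →
    (⋂ i, STset T (U i) δ).Nonempty

/-- Thickly syndetically transitive system. -/
def ThicklySyndeticallyTransitive [TopologicalSpace X] (T : X → X) : Prop :=
  ∀ U V : Set X, Opene U → Opene V → ThicklySyndeticSet (NTset T U V)

/-- A proximal pair: `liminf d(Tⁿx,Tⁿy) = 0`. -/
def ProximalPair [MetricSpace X] (T : X → X) (x y : X) : Prop :=
  liminf (fun n : ℕ => dist (T^[n] x) (T^[n] y)) atTop = 0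

/-- A proximal system: every pair of points is proximal. -/
def ProximalSystem [MetricSpace X] (T : X → X) : Prop :=
  ∀ x y : X, ProximalPair T x y

/-- The proximal cell of `x`. -/
def ProxCell [MetricSpace X] (T : X → X) (x : X) : Set X :=
  {y | ProximalPair T x y}

/-- Li-Yorke sensitivity. -/
def LiYorkeSensitive [MetricSpace X] (T : X → X) : Prop :=
  ∃ δ : ℝ, 0 < δ ∧ ∀ x : X, ∀ U ∈ 𝓝 x, ∃ y ∈ U,
    liminf (fun n : ℕ => dist (T^[n] x) (T^[n] y)) atTop = 0 ∧
    δ < limsup (fun n : ℕ => dist (T^[n] x) (T^[n] y)) atTop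

/-- Spatio-temporally chaotic system. -/
def SpatioTemporallyChaotic [MetricSpace X] (T : X → X) : Prop :=
  ∀ x : X, ∀ U ∈ 𝓝 x, ∃ y ∈ U,
    liminf (fun n : ℕ => dist (T^[n] x) (T^[n] y)) atTop = 0 ∧
    0 < limsup (fun n : ℕ => dist (T^[n] x) (T^[n] y)) atTop

/-- A distal point: not proximal to any other point of its orbit closure. -/
def IsDistalPoint [MetricSpace X] (T : X → X) (x : X) : Prop :=
  ∀ y ∈ closure (Set.range fun n : ℕ => T^[n] x), y ≠ x →
    0 < liminf (fun n : ℕ => dist (T^[n] x) (T^[n] y)) atTop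

/-- The Lyapunov number `𝕃_r`. -/
noncomputable def LyapR [MetricSpace X] (T : X → X) : ℝ :=
  sSup {δ : ℝ | 0 < δ ∧ ∀ x : X, ∀ U : Set X, IsOpen U → x ∈ U →
    ∃ y ∈ U, ∃ n : ℕ, δ < dist (T^[n] x) (T^[n] y)}

/-- The Lyapunov number `𝕃̄_r`. -/
noncomputable def LyapRbar [MetricSpace X] (T : X → X) : ℝ :=
  sSup {δ : ℝ | 0 < δ ∧ ∀ x : X, ∀ U : Set X, IsOpen U → x ∈ U →
    ∃ y ∈ U, δ < limsup (fun n : ℕ => dist (T^[n] x) (T^[n] y)) atTop}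

/-- `min_{1≤i≤k} d(Tⁿ xᵢ, Tⁿ yᵢ)`. -/
noncomputable def minDist [MetricSpace X] (T : X → X) {k : ℕ}
    (x y : Fin (k + 1) → X) (n : ℕ) : ℝ :=
  Finset.univ.inf' Finset.univ_nonempty (fun i => dist (T^[n] (x i)) (T^[n] (y i)))

/-- The Lyapunov number `𝕃_{m,r}`. -/
noncomputable def LyapMR [MetricSpace X] (T : X → X) : ℝ :=
  sSup {δ : ℝ | 0 < δ ∧ ∀ (k : ℕ) (x : Fin (k + 1) → X) (U : Fin (k + 1) → Set X),
    (∀ i, IsOpen (U i) ∧ x i ∈ U i) →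
    ∃ y : Fin (k + 1) → X, (∀ i, y i ∈ U i) ∧ ∃ n : ℕ, δ < minDist T x y n}

/-- The Lyapunov number `𝕃̄_{m,r}`. -/
noncomputable def LyapMRbar [MetricSpace X] (T : X → X) : ℝ :=
  sSup {δ : ℝ | 0 < δ ∧ ∀ (k : ℕ) (x : Fin (k + 1) → X) (U : Fin (k + 1) → Set X),
    (∀ i, IsOpen (U i) ∧ x i ∈ U i) →
    ∃ y : Fin (k + 1) → X, (∀ i, y i ∈ U i) ∧
      δ < limsup (fun n : ℕ => minDist T x y n) atTop}

/-- The Lyapunov number `𝕃_{m,d}`. -/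
noncomputable def LyapMD [MetricSpace X] (T : X → X) : ℝ :=
  sSup {δ : ℝ | 0 < δ ∧ ∀ (k : ℕ) (U : Fin (k + 1) → Set X), (∀ i, Opene (U i)) →
    ∃ x y : Fin (k + 1) → X, (∀ i, x i ∈ U i ∧ y i ∈ U i) ∧ ∃ n : ℕ, δ < minDist T x y n}

/-- The Lyapunov number `𝕃̄_{m,d}`. -/
noncomputable def LyapMDbar [MetricSpace X] (T : X → X) : ℝ :=
  sSup {δ : ℝ | 0 < δ ∧ ∀ (k : ℕ) (U : Fin (k + 1) → Set X), (∀ i, Opene (U i)) →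
    ∃ x y : Fin (k + 1) → X, (∀ i, x i ∈ U i ∧ y i ∈ U i) ∧
      δ < limsup (fun n : ℕ => minDist T x y n) atTop}

/-- `(k,T,ε)`-separated set with respect to the sequence `ns` (with `ns 0 = 0` by convention). -/
def IsSepSet [MetricSpace X] (T : X → X) (ns : ℕ → ℕ) (k : ℕ) (ε : ℝ) (E : Set X) : Prop :=
  ∀ x ∈ E, ∀ y ∈ E, x ≠ y → ∃ j < k, ε < dist (T^[ns j] x) (T^[ns j] y)

/-- `sep(k,T,ε)`: maximal cardinality of a `(k,T,ε)`-separated set. -/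
noncomputable def sepNum [MetricSpace X] (T : X → X) (ns : ℕ → ℕ) (k : ℕ) (ε : ℝ) : ℕ :=
  sSup {r : ℕ | ∃ E : Finset X, IsSepSet T ns k ε ↑E ∧ E.card = r}

/-- Topological sequence entropy along `ns`:
`h_N(T) = lim_{ε→0} limsup_{k→∞} (1/k) log sep(k,T,ε)` (the limit as `ε → 0⁺` of the
nonincreasing-in-`ε` quantity, i.e. the supremum over `ε > 0`). -/
noncomputable def seqEntropy [MetricSpace X] (T : X → X) (ns : ℕ → ℕ) : EReal :=
  ⨆ (ε : ℝ) (_ : 0 < ε),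
    limsup (fun k : ℕ => ((Real.log (sepNum T ns k ε) / k : ℝ) : EReal)) atTop

end Defs

section Aux

variable {X : Type*} [MetricSpace X] [CompactSpace X] {T : X → X}

lemma prodIter (T : X → X) (n : ℕ) (p : X × X) :
    (fun p : X × X => (T p.1, T p.2))^[n] p = (T^[n] p.1, T^[n] p.2) := by
  induction n generalizing p with
  | zero => simp
  | succ n ih =>
    rw [Function.iterate_succ_apply, ih, Function.iterate_succ_apply,
      Function.iterate_succ_apply]

lemma NTset_mono {U V U' V' : Set X} (hU : U ⊆ U') (hV : V ⊆ V') :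
    NTset T U V ⊆ NTset T U' V' := by
  rintro n ⟨x, hx1, hx2⟩
  exact ⟨x, hU hx1, hV hx2⟩

/-- Auxiliary property H. -/
def Haux (T : X → X) : Prop :=
  ∀ G U V : Set X, Opene G → Opene U → Opene V →
    (NTset T G G ∩ NTset T U V).Nonempty

lemma wm_pair (hwm : WeaklyMixing T) {A B C D : Set X}
    (hA : Opene A) (hB : Opene B) (hC : Opene C) (hD : Opene D) :
    (NTset T A B ∩ NTset T C D).Nonempty := by
  obtain ⟨n, p, hp1, hp2⟩ := hwm (A ×ˢ C) (B ×ˢ D)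
    ⟨hA.1.prod hC.1, hA.2.prod hC.2⟩ ⟨hB.1.prod hD.1, hB.2.prod hD.2⟩
  rw [Set.mem_preimage, prodIter] at hp2
  exact ⟨n, ⟨p.1, hp1.1, hp2.1⟩, ⟨p.2, hp1.2, hp2.2⟩⟩

lemma haux_to_wm (hTc : Continuous T) (hTs : Function.Surjective T)
    (hH : Haux T) : WeaklyMixing T := by
  intro 𝒰 𝒱 h𝒰 h𝒱
  obtain ⟨⟨a, c⟩, hac⟩ := h𝒰.2
  obtain ⟨A, C, hAo, hCo, haA, hcC, hACsub⟩ := (isOpen_prod_iff.1 h𝒰.1) a c hac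
  obtain ⟨⟨b, d⟩, hbd⟩ := h𝒱.2
  obtain ⟨B, D, hBo, hDo, hbB, hdD, hBDsub⟩ := (isOpen_prod_iff.1 h𝒱.1) b d hbd
  have hA : Opene A := ⟨hAo, ⟨a, haA⟩⟩
  have hB : Opene B := ⟨hBo, ⟨b, hbB⟩⟩
  have hC : Opene C := ⟨hCo, ⟨c, hcC⟩⟩
  have hD : Opene D := ⟨hDo, ⟨d, hdD⟩⟩
  obtain ⟨n, -, hnAB⟩ := hH A A B hA hA hB
  have hA₁ : Opene (A ∩ T^[n] ⁻¹' B) :=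
    ⟨hAo.inter (hBo.preimage (hTc.iterate n)), hnAB⟩
  have hTD : Opene (T^[n] ⁻¹' D) :=
    ⟨hDo.preimage (hTc.iterate n), hD.2.preimage (hTs.iterate n)⟩
  obtain ⟨m, ⟨z, hz1, hz2⟩, ⟨w, hw1, hw2⟩⟩ := hH _ C _ hA₁ hC hTD
  refine ⟨n + m, (z, w), Set.mem_inter (hACsub ⟨hz1.1, hw1⟩) ?_⟩
  rw [Set.mem_preimage, prodIter]
  refine hBDsub ⟨?_, ?_⟩
  · have := (Set.mem_preimage.1 hz2).2
    rwa [Function.iterate_add_apply]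
  · show T^[n+m] w ∈ D
    rw [Function.iterate_add_apply]
    exact hw2

lemma two_to_haux (h : ∃ X' : Set X, Dense X' ∧ ∀ x ∈ X', x ∈ omegaNT T x) :
    Haux T := by
  obtain ⟨X', hd, hmem⟩ := h
  intro G U V hG hU hV
  obtain ⟨x, hxX', hxG⟩ := hd.exists_mem_open hG.1 hG.2
  obtain ⟨n, hn1, hn2⟩ := hmem x hxX' G hG.1 hxG U V hU hV
  exact ⟨n, ⟨x, hxG, hn1⟩, hn2⟩

lemma three_to_haux (hTc : Continuous T) (hTs : Function.Surjective T)
    (h : ∃ x₀ : X, omegaNT T x₀ = Set.univ) : Haux T := by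
  obtain ⟨x₀, hx₀⟩ := h
  have key : ∀ G' U' V' : Set X, Opene G' → Opene U' → Opene V' →
      ∃ n, T^[n] x₀ ∈ G' ∧ n ∈ NTset T U' V' := by
    intro G' U' V' hG' hU' hV'
    obtain ⟨z, hz⟩ := hG'.2
    have hzω : z ∈ omegaNT T x₀ := by rw [hx₀]; trivial
    obtain ⟨n, hn1, hn2⟩ := hzω G' hG'.1 hz U' V' hU' hV'
    exact ⟨n, hn1, hn2⟩
  intro G U V hG hU hV
  obtain ⟨n₁, hn₁, -⟩ := key G U V hG hU hV
  have hG₂ : Opene (T^[n₁] ⁻¹' G) :=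
    ⟨hG.1.preimage (hTc.iterate n₁), hG.2.preimage (hTs.iterate n₁)⟩
  obtain ⟨n₂, hn₂G, hn₂UV⟩ := key _ U V hG₂ hU hV
  refine ⟨n₂, ⟨T^[n₁] x₀, hn₁, ?_⟩, hn₂UV⟩
  rw [Set.mem_preimage, ← Function.iterate_add_apply, add_comm,
    Function.iterate_add_apply]
  exact hn₂G

lemma wm_to_four (hTc : Continuous T) (hwm : WeaklyMixing T) :
    ∃ X'' : Set X, Dense X'' ∧ IsGδ X'' ∧
      ∀ x ∈ X'', omegaNT T x = Set.univ := by
  obtain ⟨b, hbc, hbne, hb⟩ := TopologicalSpace.exists_countable_basis X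
  set S : Set (Set X × Set X × Set X) := b ×ˢ b ×ˢ b with hS
  have hSc : S.Countable := hbc.prod (hbc.prod hbc)
  set W : Set X × Set X × Set X → Set X :=
    fun p => ⋃ n ∈ NTset T p.2.1 p.2.2, T^[n] ⁻¹' p.1 with hW
  have hopene : ∀ s ∈ b, Opene s := by
    intro s hs
    refine ⟨hb.isOpen hs, Set.nonempty_iff_ne_empty.2 ?_⟩
    rintro rfl; exact hbne hs
  have hWopen : ∀ p ∈ S, IsOpen (W p) := by
    rintro ⟨G, U, V⟩ ⟨hG, hU, hV⟩
    exact isOpen_biUnion fun n _ => ((hopene G hG).1).preimage (hTc.iterate n)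
  have hWdense : ∀ p ∈ S, Dense (W p) := by
    rintro ⟨G, U, V⟩ ⟨hG, hU, hV⟩
    rw [dense_iff_inter_open]
    intro O hOo hOne
    obtain ⟨n, ⟨x, hx1, hx2⟩, hnUV⟩ :=
      wm_pair hwm ⟨hOo, hOne⟩ (hopene G hG) (hopene U hU) (hopene V hV)
    exact ⟨x, hx1, Set.mem_biUnion hnUV hx2⟩
  refine ⟨⋂ p ∈ S, W p, dense_biInter_of_isOpen hWopen hSc hWdense,
    IsGδ.biInter hSc fun p hp => (hWopen p hp).isGδ, ?_⟩
  intro x hx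
  rw [Set.eq_univ_iff_forall]
  intro z G hGo hzG U V hU hV
  obtain ⟨G₀, hG₀b, hzG₀, hG₀sub⟩ := hb.exists_subset_of_mem_open hzG hGo
  obtain ⟨u, hu⟩ := hU.2
  obtain ⟨U₀, hU₀b, huU₀, hU₀sub⟩ := hb.exists_subset_of_mem_open hu hU.1
  obtain ⟨v, hv⟩ := hV.2
  obtain ⟨V₀, hV₀b, hvV₀, hV₀sub⟩ := hb.exists_subset_of_mem_open hv hV.1
  have hxW : x ∈ W (G₀, U₀, V₀) :=
    Set.mem_iInter₂.mp hx (G₀, U₀, V₀) ⟨hG₀b, hU₀b, hV₀b⟩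
  obtain ⟨n, hn, hxn⟩ := Set.mem_iUnion₂.1 hxW
  exact ⟨n, hG₀sub hxn, NTset_mono hU₀sub hV₀sub hn⟩

end Aux

/-- Equivalent characterizations of weak mixing via `ω_{N_T}`-limit sets. -/
theorem stmt7 {X : Type*} [MetricSpace X] [CompactSpace X] [Nontrivial X]
    (hperf : ∀ x : X, (𝓝[≠] x).NeBot)
    {T : X → X} (hTc : Continuous T) (hTs : Function.Surjective T) :
    (WeaklyMixing T ↔ ∃ X' : Set X, Dense X' ∧ ∀ x ∈ X', x ∈ omegaNT T x) ∧
    (WeaklyMixing T ↔ ∃ x₀ : X, omegaNT T x₀ = Set.univ) ∧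
    (WeaklyMixing T ↔ ∃ X'' : Set X, Dense X'' ∧ IsGδ X'' ∧
      ∀ x ∈ X'', omegaNT T x = Set.univ) := by
  have four : WeaklyMixing T → ∃ X'' : Set X, Dense X'' ∧ IsGδ X'' ∧
      ∀ x ∈ X'', omegaNT T x = Set.univ := wm_to_four hTc
  have three : (∃ X'' : Set X, Dense X'' ∧ IsGδ X'' ∧
      ∀ x ∈ X'', omegaNT T x = Set.univ) → ∃ x₀ : X, omegaNT T x₀ = Set.univ := by
    rintro ⟨X'', hd, -, h⟩
    obtain ⟨x₀, hx₀⟩ := hd.nonempty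
    exact ⟨x₀, h x₀ hx₀⟩
  refine ⟨⟨fun hwm => ?_, fun h => haux_to_wm hTc hTs (two_to_haux h)⟩,
    ⟨fun hwm => three (four hwm), fun h => haux_to_wm hTc hTs (three_to_haux hTc hTs h)⟩,
    ⟨four, fun h => haux_to_wm hTc hTs (three_to_haux hTc hTs (three h))⟩⟩
  obtain ⟨X'', hd, -, h⟩ := four hwm
  exact ⟨X'', hd, fun x hx => by rw [h x hx]; trivial⟩
end

section
/- Let (X,T) be a weakly mixing dynamical system and x ∈ X. Then the set ω_{N_T}(x) is T-invariant, i.e., T(ω_{N_T}(x)) = ω_{N_T}(x). -/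
open Filter Topology Set Metric

section AuxLemmas

variable {X : Type*}

lemma myNTset_mono {T : X → X} {U V U' V' : Set X} (hU : U' ⊆ U) (hV : V' ⊆ V) :
    NTset T U' V' ⊆ NTset T U V := by
  rintro n ⟨p, hp1, hp2⟩
  exact ⟨p, hU hp1, hV hp2⟩

lemma myFurst [TopologicalSpace X] {T : X → X} (hTc : Continuous T) (hwm : WeaklyMixing T)
    {U₁ V₁ U₂ V₂ : Set X} (hU₁ : Opene U₁) (hV₁ : Opene V₁) (hU₂ : Opene U₂) (hV₂ : Opene V₂) :
    ∃ U V : Set X, Opene U ∧ Opene V ∧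
      NTset T U V ⊆ NTset T U₁ V₁ ∧ NTset T U V ⊆ NTset T U₂ V₂ := by
  obtain ⟨n, p, hp1, hp2⟩ := hwm (U₁ ×ˢ V₁) (U₂ ×ˢ V₂)
    ⟨(hU₁.1.prod hV₁.1), hU₁.2.prod hV₁.2⟩ ⟨(hU₂.1.prod hV₂.1), hU₂.2.prod hV₂.2⟩
  have hiter : (fun q : X × X => (T q.1, T q.2))^[n] p = (T^[n] p.1, T^[n] p.2) := by
    have heq : (fun q : X × X => (T q.1, T q.2)) = Prod.map T T := rfl
    rw [heq, Prod.map_iterate]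
    rfl
  rw [Set.mem_preimage, hiter, Set.mem_prod] at hp2
  rw [Set.mem_prod] at hp1
  refine ⟨U₁ ∩ T^[n] ⁻¹' U₂, V₁ ∩ T^[n] ⁻¹' V₂,
    ⟨hU₁.1.inter (hU₂.1.preimage (hTc.iterate n)), p.1, hp1.1, hp2.1⟩,
    ⟨hV₁.1.inter (hV₂.1.preimage (hTc.iterate n)), p.2, hp1.2, hp2.2⟩,
    myNTset_mono Set.inter_subset_left Set.inter_subset_left, ?_⟩
  rintro m ⟨q, ⟨hq1, hq1'⟩, hq2⟩
  rw [Set.mem_preimage] at hq2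
  obtain ⟨hq2, hq2'⟩ := hq2
  refine ⟨T^[n] q, hq1', ?_⟩
  rw [Set.mem_preimage, ← Function.iterate_add_apply, Nat.add_comm, Function.iterate_add_apply]
  exact hq2'

lemma myShift {T : X → X} {A B : Set X} {m : ℕ} (h : m + 1 ∈ NTset T (T ⁻¹' A) B) :
    m ∈ NTset T A B := by
  obtain ⟨p, hp1, hp2⟩ := h
  rw [Set.mem_preimage] at hp1 hp2
  exact ⟨T p, hp1, by rw [Set.mem_preimage, ← Function.iterate_succ_apply]; exact hp2⟩

lemma myShrink [MetricSpace X] (hperf : ∀ x : X, (𝓝[≠] x).NeBot) {U V : Set X}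
    (hU : Opene U) (hV : Opene V) :
    ∃ U' V' : Set X, Opene U' ∧ Opene V' ∧ U' ⊆ U ∧ V' ⊆ V ∧ U' ∩ V' = ∅ := by
  obtain ⟨u, hu⟩ := hU.2
  have hv : ∃ v ∈ V, v ≠ u := by
    by_cases h : u ∈ V
    · have h1 : V ∈ 𝓝[≠] u := mem_nhdsWithin_of_mem_nhds (hV.1.mem_nhds h)
      have h2 : ({u}ᶜ : Set X) ∈ 𝓝[≠] u := self_mem_nhdsWithin
      obtain ⟨v, hv1, hv2⟩ := Filter.nonempty_of_mem (Filter.inter_mem h1 h2)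
      exact ⟨v, hv1, hv2⟩
    · obtain ⟨v, hvV⟩ := hV.2
      exact ⟨v, hvV, fun h' => h (h' ▸ hvV)⟩
  obtain ⟨v, hvV, hvu⟩ := hv
  have hd : 0 < dist u v := dist_pos.mpr (Ne.symm hvu)
  refine ⟨U ∩ ball u (dist u v / 2), V ∩ ball v (dist u v / 2),
    ⟨hU.1.inter isOpen_ball, u, hu, mem_ball_self (by linarith)⟩,
    ⟨hV.1.inter isOpen_ball, v, hvV, mem_ball_self (by linarith)⟩,
    Set.inter_subset_left, Set.inter_subset_left, ?_⟩
  ext p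
  simp only [Set.mem_inter_iff, Set.mem_empty_iff_false, iff_false]
  rintro ⟨⟨-, hp1⟩, ⟨-, hp2⟩⟩
  rw [mem_ball, dist_comm] at hp1
  rw [mem_ball, dist_comm] at hp2
  have htri := dist_triangle u p v
  rw [dist_comm p v] at htri
  linarith

end AuxLemmas

/-- For a weakly mixing system, `ω_{N_T}(x)` is `T`-invariant:
`T(ω_{N_T}(x)) = ω_{N_T}(x)`. -/
theorem stmt8 {X : Type*} [MetricSpace X] [CompactSpace X] [Nontrivial X]
    (hperf : ∀ x : X, (𝓝[≠] x).NeBot)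
    {T : X → X} (hTc : Continuous T) (hTs : Function.Surjective T)
    (hwm : WeaklyMixing T) (x : X) :
    T '' omegaNT T x = omegaNT T x := by
  apply Set.Subset.antisymm
  · rintro _ ⟨z, hz, rfl⟩
    intro G hG hTzG U V hU hV
    obtain ⟨n, hn1, hn2⟩ := hz (T ⁻¹' G) (hG.preimage hTc) hTzG U (T ⁻¹' V)
      hU ⟨hV.1.preimage hTc, hV.2.preimage hTs⟩
    refine ⟨n + 1, ?_, ?_⟩
    · show T^[n+1] x ∈ G
      rw [Function.iterate_succ_apply']
      exact hn1
    · obtain ⟨p, hp1, hp2⟩ := hn2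
      rw [Set.mem_preimage, Set.mem_preimage] at hp2
      exact ⟨p, hp1, by rw [Set.mem_preimage, Function.iterate_succ_apply']; exact hp2⟩
  · intro z hz
    by_contra hcon
    have hchoice : ∀ w : (T ⁻¹' {z} : Set X), ∃ G U V : Set X,
        IsOpen G ∧ (w : X) ∈ G ∧ Opene U ∧ Opene V ∧
        NTpt T x G ∩ NTset T U V = ∅ := by
      rintro ⟨w, hw⟩
      rw [Set.mem_preimage, Set.mem_singleton_iff] at hw
      have h1 : w ∉ omegaNT T x := fun hmem => hcon ⟨w, hmem, hw⟩
      simp only [omegaNT, Set.mem_setOf_eq] at h1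
      push_neg at h1
      obtain ⟨G, hG, hwG, U, V, hU, hV, hne⟩ := h1
      exact ⟨G, U, V, hG, hwG, hU, hV, hne⟩
    choose Gf Uf Vf hGo hGm hUo hVo hemp using hchoice
    have hKc : IsCompact (T ⁻¹' {z}) := (isClosed_singleton.preimage hTc).isCompact
    obtain ⟨t, ht⟩ := hKc.elim_finite_subcover Gf hGo
      (fun w hw => Set.mem_iUnion.mpr ⟨⟨w, hw⟩, hGm ⟨w, hw⟩⟩)
    have hind : ∀ s : Finset (T ⁻¹' {z} : Set X), ∃ U V : Set X, Opene U ∧ Opene V ∧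
        ∀ i ∈ s, NTset T U V ⊆ NTset T (T ⁻¹' (Uf i)) (Vf i) := by
      intro s
      classical
      induction s using Finset.induction_on with
      | empty =>
        exact ⟨Set.univ, Set.univ, ⟨isOpen_univ, Set.univ_nonempty⟩,
          ⟨isOpen_univ, Set.univ_nonempty⟩, by simp⟩
      | @insert a s _ ih =>
        obtain ⟨U, V, hU, hV, hsub⟩ := ih
        obtain ⟨U', V', hU', hV', h1, h2⟩ := myFurst hTc hwm
          ⟨(hUo a).1.preimage hTc, (hUo a).2.preimage hTs⟩ (hVo a) hU hV
        refine ⟨U', V', hU', hV', fun i hi => ?_⟩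
        rcases Finset.mem_insert.mp hi with rfl | hi
        · exact h1
        · exact h2.trans (hsub i hi)
    obtain ⟨U, V, hU, hV, hsub⟩ := hind t
    obtain ⟨U', V', hU', hV', hU'sub, hV'sub, hdisj⟩ := myShrink hperf hU hV
    set O : Set X := ⋃ i ∈ t, Gf i with hO
    have hOopen : IsOpen O := isOpen_biUnion fun i _ => hGo i
    have hGopen : IsOpen (T '' Oᶜ)ᶜ :=
      ((hOopen.isClosed_compl.isCompact).image hTc).isClosed.isOpen_compl
    have hzG : z ∈ (T '' Oᶜ)ᶜ := by
      rintro ⟨p, hpO, hpz⟩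
      exact hpO (ht (show p ∈ T ⁻¹' {z} by simp [hpz]))
    obtain ⟨n, hn1, hn2⟩ := hz _ hGopen hzG U' V' hU' hV'
    have hn0 : n ≠ 0 := by
      rintro rfl
      obtain ⟨p, hp1, hp2⟩ := hn2
      rw [Function.iterate_zero, Set.preimage_id] at hp2
      exact Set.eq_empty_iff_forall_notMem.mp hdisj p ⟨hp1, hp2⟩
    obtain ⟨m, rfl⟩ := Nat.exists_eq_succ_of_ne_zero hn0
    have hmO : T^[m] x ∈ O := by
      by_contra hmO
      exact hn1 ⟨T^[m] x, hmO, (Function.iterate_succ_apply' T m x).symm⟩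
    obtain ⟨i, hit, hmGi⟩ := Set.mem_iUnion₂.mp hmO
    have hm1 : m ∈ NTpt T x (Gf i) := hmGi
    have hm2 : m ∈ NTset T (Uf i) (Vf i) :=
      myShift (hsub i hit (myNTset_mono hU'sub hV'sub hn2))
    exact Set.eq_empty_iff_forall_notMem.mp (hemp i) m ⟨hm1, hm2⟩
end

section
/- Let (X,T) be a transitive compact dynamical system. Then for every x ∈ X the proximal cell Prox_T(x) is a dense Gδ subset of X. -/
open Filter Topology Set Metric

section Aux
variable {Y : Type*} [MetricSpace Y] [CompactSpace Y] {T : Y → Y}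

private lemma prox_iff_aux (hTc : Continuous T) (x y : Y) :
    ProximalPair T x y ↔ ∀ k : ℕ, ∃ n : ℕ, dist (T^[n] x) (T^[n] y) < 1 / (k + 1) := by
  obtain ⟨C, hC⟩ := Metric.isBounded_iff.1 (isCompact_univ : IsCompact (univ : Set Y)).isBounded
  set f : ℕ → ℝ := fun n => dist (T^[n] x) (T^[n] y) with hf
  have hbd : IsBoundedUnder (· ≤ ·) atTop f :=
    isBoundedUnder_of ⟨C, fun n => hC (mem_univ (T^[n] x)) (mem_univ (T^[n] y))⟩
  have hbd0 : IsBoundedUnder (· ≥ ·) atTop f :=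
    isBoundedUnder_of ⟨0, fun n => dist_nonneg⟩
  rw [ProximalPair]
  constructor
  · intro hp k
    by_contra h
    push_neg at h
    have h1 : (1 : ℝ) / (k + 1) ≤ liminf f atTop :=
      le_liminf_of_le hbd.isCoboundedUnder_ge (Eventually.of_forall h)
    rw [hp] at h1
    have : (0 : ℝ) < 1 / ((k : ℝ) + 1) := by positivity
    linarith
  · intro h
    by_cases heq : ∃ n, T^[n] x = T^[n] y
    · obtain ⟨n, hn⟩ := heq
      have hev : ∀ᶠ m in atTop, f m = 0 := by
        filter_upwards [eventually_ge_atTop n] with m hm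
        have h1 : m - n + n = m := Nat.sub_add_cancel hm
        have : T^[m] x = T^[m] y := by
          calc T^[m] x = T^[m - n] (T^[n] x) := by rw [← Function.iterate_add_apply, h1]
          _ = T^[m - n] (T^[n] y) := by rw [hn]
          _ = T^[m] y := by rw [← Function.iterate_add_apply, h1]
        simp [hf, this]
      have : Tendsto f atTop (𝓝 0) :=
        Tendsto.congr' (hev.mono fun m hm => hm.symm) tendsto_const_nhds
      exact this.liminf_eq
    · push_neg at heq
      have hpos : ∀ n, 0 < f n := fun n => dist_pos.2 (heq n)
      have hfreq : ∀ ε : ℝ, 0 < ε → ∃ᶠ n in atTop, f n ≤ ε := by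
        intro ε hε
        rw [frequently_atTop]
        intro N
        set c : ℝ := min ε ((Finset.range (N + 1)).inf' (by simp) f) with hc
        have hcpos : 0 < c :=
          lt_min hε ((Finset.lt_inf'_iff _).2 fun i _ => hpos i)
        obtain ⟨k, hk⟩ := exists_nat_one_div_lt hcpos
        obtain ⟨n, hn⟩ := h k
        have hnc : f n < c := lt_trans hn hk
        refine ⟨n, ?_, le_of_lt (lt_of_lt_of_le hnc (min_le_left _ _))⟩
        by_contra hlt
        push_neg at hlt
        have : c ≤ f n :=
          le_trans (min_le_right _ _) (Finset.inf'_le _ (Finset.mem_range.2 (by omega)))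
        linarith
      have hge : 0 ≤ liminf f atTop :=
        le_liminf_of_le hbd.isCoboundedUnder_ge
          (Eventually.of_forall fun n => dist_nonneg)
      have hle : liminf f atTop ≤ 0 := by
        by_contra hpos'
        push_neg at hpos'
        have h2 := liminf_le_of_frequently_le (hfreq (liminf f atTop / 2) (by linarith)) hbd0
        linarith
      linarith

end Aux

/-- In a transitive compact system, every proximal cell is a dense Gδ set. -/
theorem stmt9 {X : Type*} [MetricSpace X] [CompactSpace X] [Nontrivial X]
    (hperf : ∀ x : X, (𝓝[≠] x).NeBot)
    {T : X → X} (hTc : Continuous T) (hTs : Function.Surjective T)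
    (htc : TransCompact T) (x : X) :
    Dense (ProxCell T x) ∧ IsGδ (ProxCell T x) := by
  set W : ℕ → Set X := fun k => {y | ∃ n : ℕ, dist (T^[n] x) (T^[n] y) < 1 / (k + 1)} with hW
  have hWopen : ∀ k, IsOpen (W k) := by
    intro k
    have : W k = ⋃ n : ℕ, (fun y => dist (T^[n] x) (T^[n] y)) ⁻¹' Iio (1 / (k + 1)) := by
      ext y; simp [hW, Set.mem_iUnion]
    rw [this]
    exact isOpen_iUnion fun n =>
      IsOpen.preimage (continuous_const.dist (hTc.iterate n)) isOpen_Iio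
  have hWdense : ∀ k, Dense (W k) := by
    intro k
    rw [Metric.dense_iff]
    intro v r hr
    obtain ⟨z, hz⟩ := htc x
    have hk1 : ((k : ℝ) + 1) ≠ 0 := by positivity
    have hδ : (0 : ℝ) < 1 / (2 * ((k : ℝ) + 1)) := by positivity
    obtain ⟨n, hn1, hn2⟩ := hz (ball z (1 / (2 * ((k : ℝ) + 1)))) isOpen_ball
      (mem_ball_self hδ) (ball v r) (ball z (1 / (2 * ((k : ℝ) + 1))))
      ⟨isOpen_ball, ⟨v, mem_ball_self hr⟩⟩ ⟨isOpen_ball, ⟨z, mem_ball_self hδ⟩⟩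
    obtain ⟨y, hy1, hy2⟩ := hn2
    refine ⟨y, hy1, ⟨n, ?_⟩⟩
    have ht := dist_triangle (T^[n] x) z (T^[n] y)
    have h1 : dist (T^[n] x) z < 1 / (2 * ((k : ℝ) + 1)) := hn1
    have h2 : dist (T^[n] y) z < 1 / (2 * ((k : ℝ) + 1)) := hy2
    have h3 : dist z (T^[n] y) = dist (T^[n] y) z := dist_comm _ _
    have h4 : (1 : ℝ) / (2 * ((k : ℝ) + 1)) + 1 / (2 * ((k : ℝ) + 1)) = 1 / ((k : ℝ) + 1) := by
      rw [← add_div, div_eq_div_iff (by positivity) hk1]; ring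
    calc dist (T^[n] x) (T^[n] y) ≤ dist (T^[n] x) z + dist z (T^[n] y) := ht
    _ < 1 / ((k : ℝ) + 1) := by rw [h3]; linarith
  have hProx : ProxCell T x = ⋂ k : ℕ, W k := by
    ext y
    simp only [ProxCell, mem_setOf_eq, mem_iInter]
    rw [prox_iff_aux hTc x y]
    simp [hW]
  rw [hProx]
  exact ⟨dense_iInter_of_isOpen hWopen hWdense, IsGδ.iInter_of_isOpen hWopen⟩
end

section
/- If (X,T) is a thickly sensitive M-system, then (X,T) is thickly syndetically sensitive. -/
open Filter Topology Set Metric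

lemma exists_invariant_subset {X : Type*} [MetricSpace X] [CompactSpace X]
    {T : X → X} (hTc : Continuous T) {A : Set X} (hA : A.Nonempty) (hAcl : IsClosed A)
    (hInv : T '' A ⊆ A) :
    ∃ B : Set X, B ⊆ A ∧ B.Nonempty ∧ IsClosed B ∧ T '' B = B := by
  set K : ℕ → Set X := fun n => T^[n] '' A with hK
  have hKc : ∀ n, IsCompact (K n) := fun n => hAcl.isCompact.image (hTc.iterate n)
  have hKcl : ∀ n, IsClosed (K n) := fun n => (hKc n).isClosed
  have hKne : ∀ n, (K n).Nonempty := fun n => hA.image _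
  have hstep : ∀ n, T '' K n = K (n + 1) := by
    intro n
    show T '' (T^[n] '' A) = T^[n + 1] '' A
    rw [Function.iterate_succ', Set.image_comp]
  have hKmono : ∀ n, K (n + 1) ⊆ K n := by
    intro n
    have h1 : K (n + 1) = T^[n] '' (T '' A) := by
      show T^[n + 1] '' A = _
      rw [Function.iterate_succ, Set.image_comp]
    rw [h1]
    exact Set.image_mono hInv
  have hne : (⋂ n, K n).Nonempty :=
    IsCompact.nonempty_iInter_of_sequence_nonempty_isCompact_isClosed K hKmono hKne (hKc 0) hKcl
  refine ⟨⋂ n, K n, ?_, hne, isClosed_iInter hKcl, ?_⟩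
  · intro z hz
    have := Set.mem_iInter.1 hz 0
    simpa [hK] using this
  · apply subset_antisymm
    · rintro _ ⟨w, hw, rfl⟩
      rw [Set.mem_iInter]
      intro n
      have h1 : T w ∈ T '' K n := ⟨w, Set.mem_iInter.1 hw n, rfl⟩
      rw [hstep n] at h1
      exact hKmono n h1
    · intro z hz
      set C : ℕ → Set X := fun n => K n ∩ T ⁻¹' {z} with hC
      have hCc : ∀ n, IsCompact (C n) :=
        fun n => (hKc n).inter_right (isClosed_singleton.preimage hTc)
      have hCne : ∀ n, (C n).Nonempty := by
        intro n
        have h1 : z ∈ K (n + 1) := Set.mem_iInter.1 hz (n + 1)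
        rw [← hstep n] at h1
        obtain ⟨w, hw, hwz⟩ := h1
        exact ⟨w, hw, by simp [hwz]⟩
      have hCmono : ∀ n, C (n + 1) ⊆ C n :=
        fun n => Set.inter_subset_inter_left _ (hKmono n)
      obtain ⟨w, hw⟩ :=
        IsCompact.nonempty_iInter_of_sequence_nonempty_isCompact_isClosed C hCmono hCne (hCc 0)
          (fun n => (hKcl n).inter (isClosed_singleton.preimage hTc))
      have hw' : ∀ n, w ∈ C n := Set.mem_iInter.1 hw
      refine ⟨w, Set.mem_iInter.2 (fun n => (hw' n).1), ?_⟩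
      have := (hw' 0).2
      simpa using this

lemma minimal_syndetic {X : Type*} [MetricSpace X] [CompactSpace X]
    {T : X → X} (hTc : Continuous T) {y : X} (hy : IsMinimalPoint T y)
    {G : Set X} (hG : IsOpen G) (hyG : y ∈ G) : SyndeticSet (NTpt T y G) := by
  obtain ⟨M, ⟨hMne, hMcl, hMT, hMmin⟩, hyM⟩ := hy
  have hMsub : T '' M ⊆ M := hMT.le
  have hiter : ∀ n, ∀ z ∈ M, T^[n] z ∈ M := by
    intro n
    induction n with
    | zero => intro z hz; simpa using hz
    | succ n ih =>
      intro z hz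
      rw [Function.iterate_succ_apply']
      exact hMsub ⟨_, ih z hz, rfl⟩
  have hvisit : ∀ z ∈ M, ∃ n, T^[n] z ∈ G := by
    by_contra h
    push_neg at h
    obtain ⟨z0, hz0M, hz0⟩ := h
    set A := {z ∈ M | ∀ n, T^[n] z ∉ G} with hA
    have hAne : A.Nonempty := ⟨z0, hz0M, hz0⟩
    have hAsubM : A ⊆ M := fun z hz => hz.1
    have hAcl : IsClosed A := by
      have h1 : A = M ∩ ⋂ n, (T^[n]) ⁻¹' Gᶜ := by
        ext z
        simp [hA, Set.mem_iInter]
      rw [h1]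
      exact hMcl.inter (isClosed_iInter fun n => hG.isClosed_compl.preimage (hTc.iterate n))
    have hAinv : T '' A ⊆ A := by
      rintro _ ⟨z, ⟨hzM, hzG⟩, rfl⟩
      refine ⟨hMsub ⟨z, hzM, rfl⟩, fun n => ?_⟩
      rw [← Function.iterate_succ_apply]
      exact hzG (n + 1)
    obtain ⟨B, hBA, hBne, hBcl, hBT⟩ := exists_invariant_subset hTc hAne hAcl hAinv
    have hBM : B = M := hMmin B (hBA.trans hAsubM) hBne hBcl hBT
    have hyA : y ∈ A := hBA (hBM ▸ hyM)
    exact hyA.2 0 (by simpa using hyG)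
  have hcover : M ⊆ ⋃ n, (T^[n]) ⁻¹' G := fun z hz => Set.mem_iUnion.2 (hvisit z hz)
  obtain ⟨s, hs⟩ := hMcl.isCompact.elim_finite_subcover (fun n : ℕ => (T^[n]) ⁻¹' G)
    (fun n => hG.preimage (hTc.iterate n)) hcover
  refine ⟨s.sup id, fun i => ?_⟩
  have hzi : T^[i] y ∈ M := hiter i y hyM
  have := hs hzi
  rw [Set.mem_iUnion₂] at this
  obtain ⟨n, hns, hn⟩ := this
  refine ⟨n, Finset.le_sup (f := id) hns, ?_⟩
  show T^[i + n] y ∈ G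
  rw [add_comm, Function.iterate_add_apply]
  exact hn

lemma chain_pullback {X : Type*} [MetricSpace X] {T : X → X} (hTc : Continuous T)
    (htt : TopTransitive T) (W : ℕ → Set X) (r : ℕ) (hW : ∀ i, i ≤ r → Opene (W i)) :
    ∃ (E : Set X) (t : ℕ → ℕ), Opene E ∧ ∀ i, i ≤ r → ∀ e ∈ E, T^[t i] e ∈ W i := by
  induction r with
  | zero =>
    refine ⟨W 0, fun _ => 0, hW 0 le_rfl, ?_⟩
    intro i hi e he
    have : i = 0 := Nat.le_zero.1 hi
    subst this
    simpa using he
  | succ r ih =>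
    obtain ⟨E, t, hE, ht⟩ := ih (fun i hi => hW i (hi.trans (Nat.le_succ r)))
    obtain ⟨n, hn⟩ := htt E (W (r + 1)) hE (hW (r + 1) le_rfl)
    refine ⟨E ∩ (T^[n]) ⁻¹' (W (r + 1)), fun i => if i = r + 1 then n else t i,
      ⟨hE.1.inter ((hW (r + 1) le_rfl).1.preimage (hTc.iterate n)), hn⟩, ?_⟩
    intro i hi e he
    by_cases h : i = r + 1
    · subst h
      simpa using he.2
    · have hir : i ≤ r := Nat.lt_succ_iff.mp (lt_of_le_of_ne hi h)
      simpa [h] using ht i hir e he.1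


/-- A thickly sensitive M-system is thickly syndetically sensitive. -/
theorem stmt10 {X : Type*} [MetricSpace X] [CompactSpace X] [Nontrivial X]
    (hperf : ∀ x : X, (𝓝[≠] x).NeBot)
    {T : X → X} (hTc : Continuous T) (hTs : Function.Surjective T)
    (hM : MSystem T) (hts : ThicklySensitive T) :
    ThicklySyndeticallySensitive T := by
  obtain ⟨δ, hδ, hthick⟩ := hts
  refine ⟨δ / 2, by linarith, ?_⟩
  intro U hU N
  obtain ⟨m, hm⟩ := hthick U hU N
  have hm2 : ∀ j : ℕ, ∃ p, p ∈ U ∧ ∃ q, q ∈ U ∧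
      δ < dist (T^[m + min j N] p) (T^[m + min j N] q) :=
    fun j => hm (min j N) (min_le_right j N)
  choose u hu v hv hd using hm2
  have hsep : ∀ j, j ≤ N → δ < dist (T^[m + j] (u j)) (T^[m + j] (v j)) := by
    intro j hj
    have := hd j
    rwa [min_eq_left hj] at this
  set P : ℕ → Set X := fun j => U ∩ (T^[m + j]) ⁻¹' (ball (T^[m + j] (u j)) (δ / 8)) with hP
  set Q : ℕ → Set X := fun j => U ∩ (T^[m + j]) ⁻¹' (ball (T^[m + j] (v j)) (δ / 8)) with hQ
  have h8 : (0:ℝ) < δ / 8 := by linarith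
  have hPop : ∀ j, Opene (P j) :=
    fun j => ⟨hU.1.inter (isOpen_ball.preimage (hTc.iterate (m + j))),
      ⟨u j, hu j, mem_ball_self h8⟩⟩
  have hQop : ∀ j, Opene (Q j) :=
    fun j => ⟨hU.1.inter (isOpen_ball.preimage (hTc.iterate (m + j))),
      ⟨v j, hv j, mem_ball_self h8⟩⟩
  set W : ℕ → Set X := fun i => if i ≤ N then P i else Q (i - (N + 1)) with hW
  have hWop : ∀ i, i ≤ 2 * N + 1 → Opene (W i) := by
    intro i _
    by_cases h : i ≤ N
    · simpa [hW, h] using hPop i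
    · simpa [hW, h] using hQop (i - (N + 1))
  obtain ⟨E, t, hE, ht⟩ := chain_pullback hTc hM.1 W (2 * N + 1) hWop
  obtain ⟨y, hyE, hymin⟩ := hM.2.inter_open_nonempty E hE.1 hE.2
  have hPy : ∀ j, j ≤ N → T^[t j] y ∈ P j := by
    intro j hj
    have h1 := ht j (by omega) y hyE
    simpa [hW, hj] using h1
  have hQy : ∀ j, j ≤ N → T^[t (N + 1 + j)] y ∈ Q j := by
    intro j hj
    have h1 := ht (N + 1 + j) (by omega) y hyE
    simpa [hW, show ¬ (N + 1 + j ≤ N) from by omega,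
      show N + 1 + j - (N + 1) = j from by omega] using h1
  set D : ℕ := m + N + (Finset.range (N + 1)).sup (fun j => max (t j) (t (N + 1 + j))) with hD
  set G : Set X := ⋂ i ∈ Finset.range (D + 1), (T^[i]) ⁻¹' (ball (T^[i] y) (δ / 16)) with hG
  have hGopen : IsOpen G :=
    isOpen_biInter_finset (fun i _ => isOpen_ball.preimage (hTc.iterate i))
  have hyG : y ∈ G := by
    rw [hG]
    exact Set.mem_iInter₂.2 fun i _ => mem_ball_self (by linarith)
  obtain ⟨L, hL⟩ := minimal_syndetic hTc hymin hGopen hyG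
  refine ⟨L + m, fun i => ?_⟩
  obtain ⟨j, hjL, hjK⟩ := hL i
  refine ⟨j + m, by omega, ?_⟩
  intro jj hjj
  have hkG : T^[i + j] y ∈ G := hjK
  have hGd : ∀ e, e ≤ D → dist (T^[e] (T^[i + j] y)) (T^[e] y) < δ / 16 := by
    intro e he
    have := Set.mem_iInter₂.1 hkG e (Finset.mem_range.2 (by omega))
    simpa [dist_comm] using this
  have hmem : jj ∈ Finset.range (N + 1) := Finset.mem_range.2 (by omega)
  have hsup : max (t jj) (t (N + 1 + jj)) ≤
      (Finset.range (N + 1)).sup (fun j => max (t j) (t (N + 1 + j))) :=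
    Finset.le_sup (f := fun j => max (t j) (t (N + 1 + j))) hmem
  have htj : t jj ≤ (Finset.range (N + 1)).sup (fun j => max (t j) (t (N + 1 + j))) :=
    le_trans (le_max_left _ _) hsup
  have htj2 : t (N + 1 + jj) ≤ (Finset.range (N + 1)).sup (fun j => max (t j) (t (N + 1 + j))) :=
    le_trans (le_max_right _ _) hsup
  set a := t jj with ha
  set b := t (N + 1 + jj) with hb
  set p := T^[a] y with hp
  set q := T^[b] y with hq
  have hpU : p ∈ U := (hPy jj hjj).1
  have hqU : q ∈ U := (hQy jj hjj).1
  have hpB : dist (T^[m + jj] p) (T^[m + jj] (u jj)) < δ / 8 := (hPy jj hjj).2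
  have hqB : dist (T^[m + jj] q) (T^[m + jj] (v jj)) < δ / 8 := (hQy jj hjj).2
  set n := i + j + m + jj with hn
  have hiter1 : T^[n] p = T^[m + jj + a] (T^[i + j] y) := by
    rw [hp, ← Function.iterate_add_apply, ← Function.iterate_add_apply]
    congr 1
    omega
  have hiter2 : T^[n] q = T^[m + jj + b] (T^[i + j] y) := by
    rw [hq, ← Function.iterate_add_apply, ← Function.iterate_add_apply]
    congr 1
    omega
  have hiter3 : T^[m + jj + a] y = T^[m + jj] p := by
    rw [hp, ← Function.iterate_add_apply]
  have hiter4 : T^[m + jj + b] y = T^[m + jj] q := by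
    rw [hq, ← Function.iterate_add_apply]
  have hd1 : dist (T^[n] p) (T^[m + jj] p) < δ / 16 := by
    rw [hiter1, ← hiter3]
    exact hGd (m + jj + a) (by omega)
  have hd2 : dist (T^[n] q) (T^[m + jj] q) < δ / 16 := by
    rw [hiter2, ← hiter4]
    exact hGd (m + jj + b) (by omega)
  have hfar : δ < dist (T^[m + jj] (u jj)) (T^[m + jj] (v jj)) := hsep jj hjj
  have hgoal : δ / 2 < dist (T^[n] p) (T^[n] q) := by
    have t1 : dist (T^[m + jj] (u jj)) (T^[m + jj] (v jj)) ≤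
        dist (T^[m + jj] (u jj)) (T^[n] p) + dist (T^[n] p) (T^[n] q)
          + dist (T^[n] q) (T^[m + jj] (v jj)) := dist_triangle4 _ _ _ _
    have t2 : dist (T^[m + jj] (u jj)) (T^[n] p) ≤
        dist (T^[m + jj] (u jj)) (T^[m + jj] p) + dist (T^[m + jj] p) (T^[n] p) :=
      dist_triangle _ _ _
    have t3 : dist (T^[n] q) (T^[m + jj] (v jj)) ≤
        dist (T^[n] q) (T^[m + jj] q) + dist (T^[m + jj] q) (T^[m + jj] (v jj)) :=
      dist_triangle _ _ _
    have e1 : dist (T^[m + jj] (u jj)) (T^[m + jj] p) = dist (T^[m + jj] p) (T^[m + jj] (u jj)) :=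
      dist_comm _ _
    have e2 : dist (T^[m + jj] p) (T^[n] p) = dist (T^[n] p) (T^[m + jj] p) := dist_comm _ _
    linarith
  show ∃ x ∈ U, ∃ z ∈ U, δ / 2 < dist (T^[i + (j + m) + jj] x) (T^[i + (j + m) + jj] z)
  refine ⟨p, hpU, q, hqU, ?_⟩
  rwa [show i + (j + m) + jj = n by omega]
end

section
/- If a dynamical system (X,T) is thickly syndetically transitive, then (X,T) is thickly syndetically sensitive. -/
open Filter Topology Set Metric

lemma thicklySyndetic_mono {A B : Set ℕ} (hAB : A ⊆ B) (hA : ThicklySyndeticSet A) :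
    ThicklySyndeticSet B := by
  intro N
  obtain ⟨M, hM⟩ := hA N
  exact ⟨M, fun i => by
    obtain ⟨j, hj, hjm⟩ := hM i
    exact ⟨j, hj, fun k hk => hAB (hjm k hk)⟩⟩

lemma thicklySyndetic_inter {A B : Set ℕ} (hA : ThicklySyndeticSet A)
    (hB : ThicklySyndeticSet B) : ThicklySyndeticSet (A ∩ B) := by
  intro N
  obtain ⟨NA, hNA⟩ := hA N
  obtain ⟨NB, hNB⟩ := hB (N + NA)
  refine ⟨NB + NA, fun i => ?_⟩
  obtain ⟨j, hj, hjB⟩ := hNB i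
  obtain ⟨j', hj', hj'A⟩ := hNA (i + j)
  refine ⟨j + j', by omega, fun k hk => ?_⟩
  constructor
  · have h1 : i + (j + j') + k = i + j + j' + k := by ring
    rw [h1]; exact hj'A k hk
  · have h2 : i + (j + j') + k = i + j + (j' + k) := by ring
    rw [h2]; exact hjB (j' + k) (by omega)

/-- A thickly syndetically transitive system is thickly syndetically
sensitive. -/
theorem stmt12 {X : Type*} [MetricSpace X] [CompactSpace X] [Nontrivial X]
    (hperf : ∀ x : X, (𝓝[≠] x).NeBot)
    {T : X → X} (hTc : Continuous T) (hTs : Function.Surjective T)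
    (h : ThicklySyndeticallyTransitive T) :
    ThicklySyndeticallySensitive T := by
  obtain ⟨a, b, hab⟩ := exists_pair_ne X
  set δ : ℝ := dist a b / 4 with hδdef
  have hδ : 0 < δ := by
    have := dist_pos.mpr hab
    positivity
  refine ⟨δ, hδ, fun U hU => ?_⟩
  have hBa : Opene (ball a δ) := ⟨isOpen_ball, ⟨a, mem_ball_self hδ⟩⟩
  have hBb : Opene (ball b δ) := ⟨isOpen_ball, ⟨b, mem_ball_self hδ⟩⟩
  have hsub : NTset T U (ball a δ) ∩ NTset T U (ball b δ) ⊆ STset T U δ := by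
    rintro n ⟨⟨x, hxU, hx⟩, ⟨y, hyU, hy⟩⟩
    refine ⟨x, hxU, y, hyU, ?_⟩
    have hx' : dist (T^[n] x) a < δ := hx
    have hy' : dist (T^[n] y) b < δ := hy
    have h1 : dist a b ≤ dist a (T^[n] x) + dist (T^[n] x) (T^[n] y) + dist (T^[n] y) b :=
      dist_triangle4 a (T^[n] x) (T^[n] y) b
    have h2 : dist a (T^[n] x) = dist (T^[n] x) a := dist_comm _ _
    have : dist a b = 4 * δ := by rw [hδdef]; ring
    linarith
  exact thicklySyndetic_mono hsub
    (thicklySyndetic_inter (h U (ball a δ) hU hBa) (h U (ball b δ) hU hBb))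
end

section
/- Let (X,T) be a transitive compact dynamical system. Then the Lyapunov numbers 𝕃_r and 𝕃̄_r satisfy 𝕃_r = 𝕃̄_r > 0. -/
open Filter Topology Set Metric

section Aux

variable {X : Type*} [MetricSpace X]

/-- In a perfect metric space, every nonempty open set misses a point of any finite set. -/
lemma aux_exists_notMem_finset (hperf : ∀ x : X, (𝓝[≠] x).NeBot)
    {W : Set X} (hW : IsOpen W) (hWne : W.Nonempty) (F : Finset X) :
    ∃ q ∈ W, q ∉ F := by
  obtain ⟨p, hp⟩ := hWne
  have hcl : IsClosed ((F : Set X) \ {p}) := (F.finite_toSet.diff).isClosed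
  have hopen : IsOpen (W \ ((F : Set X) \ {p})) := hW.sdiff hcl
  have hpmem : p ∈ W \ ((F : Set X) \ {p}) := ⟨hp, fun h => h.2 rfl⟩
  have hmem : (W \ ((F : Set X) \ {p})) ∈ 𝓝[≠] p :=
    mem_nhdsWithin_of_mem_nhds (hopen.mem_nhds hpmem)
  haveI := hperf p
  obtain ⟨q, hq1, hq2⟩ := Filter.nonempty_of_mem (Filter.inter_mem hmem self_mem_nhdsWithin)
  refine ⟨q, hq1.1, fun hqF => ?_⟩
  exact hq1.2 ⟨hqF, hq2⟩

lemma aux_omegaNT_mapsTo {T : X → X} (hTc : Continuous T) (hTs : Function.Surjective T)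
    {x z : X} (hz : z ∈ omegaNT T x) : T z ∈ omegaNT T x := by
  intro G hG hTz U V hU hV
  have hV' : Opene (T ⁻¹' V) := by
    refine ⟨hV.1.preimage hTc, ?_⟩
    obtain ⟨v, hv⟩ := hV.2
    obtain ⟨u, hu⟩ := hTs v
    exact ⟨u, by simp [Set.mem_preimage, hu, hv]⟩
  obtain ⟨n, hn⟩ := hz (T ⁻¹' G) (hG.preimage hTc) hTz U (T ⁻¹' V) hU hV'
  obtain ⟨y, hy1, hy2⟩ := hn.2
  refine ⟨n + 1, ?_, ?_⟩
  · have := hn.1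
    simpa [NTpt, Function.iterate_succ_apply'] using this
  · refine ⟨y, hy1, ?_⟩
    show T^[n+1] y ∈ V
    rw [Function.iterate_succ_apply']
    exact hy2

lemma aux_omegaNT_iterate {T : X → X} (hTc : Continuous T) (hTs : Function.Surjective T)
    {x z : X} (hz : z ∈ omegaNT T x) (n : ℕ) : T^[n] z ∈ omegaNT T x := by
  induction n with
  | zero => simpa using hz
  | succ k ih =>
    rw [Function.iterate_succ_apply']
    exact aux_omegaNT_mapsTo hTc hTs ih

/-- Key lemma: the return-time set `N_T(x,G) ∩ N_T(U,V)` avoids any finite set. -/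
lemma aux_key_avoid {T : X → X} (hTc : Continuous T)
    (hperf : ∀ x : X, (𝓝[≠] x).NeBot)
    {x z : X} (hz : z ∈ omegaNT T x) {G U V : Set X}
    (hG : IsOpen G) (hzG : z ∈ G) (hU : Opene U) (hV : Opene V) (F : Finset ℕ) :
    ∃ n, n ∉ F ∧ T^[n] x ∈ G ∧ ∃ y ∈ U, T^[n] y ∈ V := by
  classical
  obtain ⟨x₀, hx₀⟩ := hU.2
  by_cases hFe : F.Nonempty
  · obtain ⟨v, hvV, hvF⟩ := aux_exists_notMem_finset hperf hV.1 hV.2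
      (F.image (fun n => T^[n] x₀))
    set ρ := F.inf' hFe (fun n => dist v (T^[n] x₀)) with hρdef
    have hρpos : 0 < ρ := by
      rw [Finset.lt_inf'_iff]
      intro n hn
      have hne : v ≠ T^[n] x₀ := fun h => hvF (Finset.mem_image.mpr ⟨n, hn, h.symm⟩)
      exact dist_pos.mpr hne
    set W := ⋂ n ∈ F, (T^[n]) ⁻¹' (ball (T^[n] x₀) (ρ / 2)) with hWdef
    have hWopen : IsOpen W :=
      isOpen_biInter_finset fun n _ => isOpen_ball.preimage (hTc.iterate n)
    have hx₀W : x₀ ∈ W := by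
      refine Set.mem_iInter₂.mpr fun n _ => ?_
      exact mem_ball_self (by linarith)
    obtain ⟨n, hn⟩ := hz G hG hzG (U ∩ W) (V ∩ ball v (ρ / 2))
      ⟨hU.1.inter hWopen, ⟨x₀, hx₀, hx₀W⟩⟩
      ⟨hV.1.inter isOpen_ball, ⟨v, hvV, mem_ball_self (by linarith)⟩⟩
    obtain ⟨y, hy1, hy2⟩ := hn.2
    refine ⟨n, ?_, hn.1, y, hy1.1, hy2.1⟩
    intro hnF
    have h1 : dist (T^[n] y) (T^[n] x₀) < ρ / 2 := by
      have := Set.mem_iInter₂.mp hy1.2 n hnF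
      simpa [mem_ball] using this
    have h2 : dist v (T^[n] y) < ρ / 2 := by
      have := hy2.2
      rw [mem_ball, dist_comm] at this
      exact this
    have h3 : ρ ≤ dist v (T^[n] x₀) := Finset.inf'_le _ hnF
    have htri := dist_triangle v (T^[n] y) (T^[n] x₀)
    linarith
  · obtain ⟨n, hn⟩ := hz G hG hzG U V hU hV
    obtain ⟨y, hy1, hy2⟩ := hn.2
    exact ⟨n, by simp [Finset.not_nonempty_iff_eq_empty.mp hFe], hn.1, y, hy1, hy2⟩

/-- Main construction: a single point `y ∈ U` with large `limsup` distance from the orbit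
of `x`. -/
lemma aux_limsup_lower [CompactSpace X] {T : X → X} (hTc : Continuous T)
    (hperf : ∀ x : X, (𝓝[≠] x).NeBot)
    {C : ℝ} (hC : ∀ a b : X, dist a b ≤ C)
    {t : ℝ} (ht : 0 < t) {x : X} {U : Set X} (hUopen : IsOpen U) (hxU : x ∈ U)
    {z w : X} (hz : z ∈ omegaNT T x) (hd : t < dist z w) :
    ∃ y ∈ U, t < Filter.limsup (fun n : ℕ => dist (T^[n] x) (T^[n] y)) Filter.atTop := by
  classical
  set t' : ℝ := (t + dist z w) / 2 with ht'def
  have htt' : t < t' := by simp only [ht'def]; linarith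
  set ρ : ℝ := (dist z w - t') / 2 with hρdef
  have hρpos : 0 < ρ := by simp only [hρdef, ht'def]; linarith
  -- one step of the construction
  have step : ∀ O : Set X, IsOpen O → O.Nonempty → ∀ m : ℕ,
      ∃ (y : X) (r : ℝ) (n : ℕ), 0 < r ∧ m < n ∧ closedBall y r ⊆ O ∧
        ∀ y' ∈ closedBall y r, t' < dist (T^[n] x) (T^[n] y') := by
    intro O hO hOne m
    obtain ⟨n, hnF, hnG, y, hyO, hyV⟩ := aux_key_avoid hTc hperf hz
      (isOpen_ball (x := z) (ε := ρ)) (mem_ball_self hρpos) ⟨hO, hOne⟩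
      ⟨isOpen_ball (x := w) (ε := ρ), ⟨w, mem_ball_self hρpos⟩⟩ (Finset.range (m + 1))
    have hm : m < n := by
      by_contra hc
      exact hnF (Finset.mem_range.mpr (by omega))
    have h1 : dist z (T^[n] x) < ρ := by rw [← mem_ball']; exact hnG
    have h2 : dist (T^[n] y) w < ρ := by rw [← mem_ball]; exact hyV
    have hdist : t' < dist (T^[n] x) (T^[n] y) := by
      have htri := dist_triangle4 z (T^[n] x) (T^[n] y) w
      have : dist z w ≤ ρ + dist (T^[n] x) (T^[n] y) + ρ := by linarith
      simp only [hρdef] at this ⊢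
      linarith
    have hopen2 : IsOpen (O ∩ {y' | t' < dist (T^[n] x) (T^[n] y')}) :=
      hO.inter (isOpen_lt continuous_const (continuous_const.dist (hTc.iterate n)))
    have hmem2 : y ∈ O ∩ {y' | t' < dist (T^[n] x) (T^[n] y')} := ⟨hyO, hdist⟩
    obtain ⟨r, hr, hsub⟩ :=
      (Metric.nhds_basis_closedBall.mem_iff).mp (hopen2.mem_nhds hmem2)
    exact ⟨y, r, n, hr, hm, hsub.trans Set.inter_subset_left,
      fun y' hy' => (hsub hy').2⟩
  -- the recursive state
  let Rec := {p : X × ℝ × ℕ // 0 < p.2.1 ∧ closedBall p.1 p.2.1 ⊆ U ∧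
      ∀ y' ∈ closedBall p.1 p.2.1, t' < dist (T^[p.2.2] x) (T^[p.2.2] y')}
  have step' : ∀ p : Rec, ∃ q : Rec,
      closedBall q.1.1 q.1.2.1 ⊆ ball p.1.1 p.1.2.1 ∧ p.1.2.2 < q.1.2.2 := by
    rintro ⟨⟨y₀, r₀, n₀⟩, hr₀, hsubU, _⟩
    obtain ⟨y, r, n, h1, h2, h3, h4⟩ := step (ball y₀ r₀) isOpen_ball
      ⟨y₀, mem_ball_self hr₀⟩ n₀
    exact ⟨⟨⟨y, r, n⟩, h1, h3.trans (ball_subset_closedBall.trans hsubU), h4⟩, h3, h2⟩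
  obtain ⟨y₀, r₀, n₀, h01, h02, h03, h04⟩ := step U hUopen ⟨x, hxU⟩ 0
  let p₀ : Rec := ⟨⟨y₀, r₀, n₀⟩, h01, h03, h04⟩
  let f : ℕ → Rec := fun k => Nat.rec p₀ (fun _ p => Classical.choose (step' p)) k
  have hf : ∀ k : ℕ, closedBall (f (k+1)).1.1 (f (k+1)).1.2.1 ⊆
      ball (f k).1.1 (f k).1.2.1 ∧ (f k).1.2.2 < (f (k+1)).1.2.2 :=
    fun k => Classical.choose_spec (step' (f k))
  set Cb : ℕ → Set X := fun k => closedBall (f k).1.1 (f k).1.2.1 with hCbdef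
  have hCsub : ∀ k, Cb (k+1) ⊆ Cb k := fun k =>
    (hf k).1.trans ball_subset_closedBall
  have hCne : ∀ k, (Cb k).Nonempty := fun k => ⟨(f k).1.1, mem_closedBall_self (f k).2.1.le⟩
  have hCcl : ∀ k, IsClosed (Cb k) := fun k => Metric.isClosed_closedBall
  obtain ⟨y, hy⟩ := IsCompact.nonempty_iInter_of_sequence_nonempty_isCompact_isClosed
    Cb hCsub hCne ((hCcl 0).isCompact) hCcl
  have hyk : ∀ k, y ∈ Cb k := Set.mem_iInter.mp hy
  have hyU : y ∈ U := (f 0).2.2.1 (hyk 0)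
  have hmono : StrictMono (fun k => (f k).1.2.2) :=
    strictMono_nat_of_lt_succ fun k => (hf k).2
  refine ⟨y, hyU, lt_of_lt_of_le htt' ?_⟩
  refine Filter.le_limsup_of_frequently_le ?_ ⟨C, Filter.eventually_map.mpr
    (Filter.Eventually.of_forall fun n => hC _ _)⟩
  rw [Filter.frequently_atTop]
  intro m
  refine ⟨(f m).1.2.2, hmono.le_apply, ?_⟩
  exact ((f m).2.2.2 y (hyk m)).le

end Aux

/-- For a transitive compact system, `𝕃_r = 𝕃̄_r > 0`. -/
theorem stmt13 {X : Type*} [MetricSpace X] [CompactSpace X] [Nontrivial X]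
    (hperf : ∀ x : X, (𝓝[≠] x).NeBot)
    {T : X → X} (hTc : Continuous T) (hTs : Function.Surjective T)
    (htc : TransCompact T) :
    LyapR T = LyapRbar T ∧ 0 < LyapR T := by
  classical
  obtain ⟨a, b, hab⟩ := exists_pair_ne X
  obtain ⟨C, hC'⟩ := Metric.isBounded_iff.mp (isCompact_univ (X := X)).isBounded
  have hC : ∀ u v : X, dist u v ≤ C := fun u v => hC' (Set.mem_univ u) (Set.mem_univ v)
  set S : Set ℝ := {δ : ℝ | 0 < δ ∧ ∀ x : X, ∀ U : Set X, IsOpen U → x ∈ U →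
    ∃ y ∈ U, ∃ n : ℕ, δ < dist (T^[n] x) (T^[n] y)} with hSdef
  set Sb : Set ℝ := {δ : ℝ | 0 < δ ∧ ∀ x : X, ∀ U : Set X, IsOpen U → x ∈ U →
    ∃ y ∈ U, δ < limsup (fun n : ℕ => dist (T^[n] x) (T^[n] y)) atTop} with hSbdef
  have hLR : LyapR T = sSup S := rfl
  have hLRb : LyapRbar T = sSup Sb := rfl
  -- S ⊆ Sb
  have hS_sub : S ⊆ Sb := by
    rintro δ ⟨hδpos, hδ⟩
    refine ⟨hδpos, fun x U hUopen hxU => ?_⟩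
    obtain ⟨z₀, hz₀⟩ := htc x
    obtain ⟨y, -, n, hdist⟩ := hδ z₀ Set.univ isOpen_univ (Set.mem_univ z₀)
    have hz : T^[n] z₀ ∈ omegaNT T x := aux_omegaNT_iterate hTc hTs hz₀ n
    exact aux_limsup_lower hTc hperf hC hδpos hUopen hxU hz hdist
  -- Sb ⊆ S
  have hSb_sub : Sb ⊆ S := by
    rintro δ ⟨hδpos, hδ⟩
    refine ⟨hδpos, fun x U hUopen hxU => ?_⟩
    obtain ⟨y, hyU, hlim⟩ := hδ x U hUopen hxU
    refine ⟨y, hyU, ?_⟩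
    by_contra hcon
    push_neg at hcon
    have hδmem : δ ∈ {a : ℝ | ∀ᶠ n in atTop,
        dist (T^[n] x) (T^[n] y) ≤ a} := Filter.Eventually.of_forall hcon
    have hbdd : BddBelow {a : ℝ | ∀ᶠ n in atTop, dist (T^[n] x) (T^[n] y) ≤ a} := by
      refine ⟨0, fun c hc => ?_⟩
      obtain ⟨n, hn⟩ := hc.exists
      exact le_trans dist_nonneg hn
    have : limsup (fun n : ℕ => dist (T^[n] x) (T^[n] y)) atTop ≤ δ := by
      rw [Filter.limsup_eq]
      exact csInf_le hbdd hδmem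
    exact absurd hlim (not_lt.mpr this)
  have hSeq : S = Sb := Set.Subset.antisymm hS_sub hSb_sub
  -- positivity witness
  set D : ℝ := dist a b with hDdef
  have hDpos : 0 < D := dist_pos.mpr hab
  have hmem : D / 4 ∈ Sb := by
    refine ⟨by linarith, fun x U hUopen hxU => ?_⟩
    obtain ⟨z, hz⟩ := htc x
    have hfar : ∃ w : X, D / 4 < dist z w := by
      by_cases hza : D / 2 ≤ dist z a
      · exact ⟨a, by linarith⟩
      · push_neg at hza
        have htri := dist_triangle a z b
        rw [dist_comm a z] at htri
        exact ⟨b, by rw [hDdef] at hza ⊢; linarith⟩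
    obtain ⟨w, hw⟩ := hfar
    exact aux_limsup_lower hTc hperf hC (by linarith) hUopen hxU hz hw
  have hbddS : BddAbove S := by
    refine ⟨C, fun δ hδ => ?_⟩
    obtain ⟨y, -, n, hdist⟩ := hδ.2 a Set.univ isOpen_univ (Set.mem_univ a)
    exact le_of_lt (lt_of_lt_of_le hdist (hC _ _))
  constructor
  · rw [hLR, hLRb, hSeq]
  · rw [hLR]
    have : D / 4 ≤ sSup S := le_csSup hbddS (hSeq ▸ hmem)
    linarith
end

section
/- Let (X,T) be a dynamical system whose set of distal points is dense in X. Then the Lyapunov numbers 𝕃_{m,r} and 𝕃̄_{m,r} satisfy 𝕃_{m,r} = 𝕃̄_{m,r}. -/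
open Filter Topology Set Metric

section AuxStmt14

open Function

attribute [local instance] Ultrafilter.add Ultrafilter.addSemigroup

variable {X : Type*} [MetricSpace X] [CompactSpace X]





variable {X : Type*} [MetricSpace X] [CompactSpace X]

/-- limit of a sequence along an ultrafilter, in a compact metric space. -/
noncomputable def ulim (u : Ultrafilter ℕ) (f : ℕ → X) : X := (u.map f).lim

theorem tendsto_ulim (u : Ultrafilter ℕ) (f : ℕ → X) : Tendsto f ↑u (𝓝 (ulim u f)) :=
  Ultrafilter.le_nhds_lim (u.map f)

theorem ulim_eq {u : Ultrafilter ℕ} {f : ℕ → X} {z : X} (h : Tendsto f ↑u (𝓝 z)) :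
    ulim u f = z :=
  tendsto_nhds_unique (tendsto_ulim u f) h

theorem tendsto_ulim_add {u : Ultrafilter ℕ} (hu : u + u = u) (f : ℕ → X) :
    Tendsto (fun m => ulim u fun n => f (m + n)) ↑u (𝓝 (ulim u f)) := by
  set z := ulim u f with hz
  rw [Metric.tendsto_nhds]
  intro ε hε
  have h : ∀ᶠ s in ↑u, dist (f s) z < ε / 2 :=
    (Metric.tendsto_nhds.mp (tendsto_ulim u f)) (ε / 2) (by positivity)
  rw [show (↑u : Filter ℕ) = ↑(u + u) from by rw [hu], Ultrafilter.eventually_add] at h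
  filter_upwards [h] with m hm
  have hd : Tendsto (fun n => dist (f (m + n)) z) ↑u
      (𝓝 (dist (ulim u fun n => f (m + n)) z)) :=
    (tendsto_ulim u _).dist tendsto_const_nhds
  have hle : dist (ulim u fun n => f (m + n)) z ≤ ε / 2 :=
    le_of_tendsto hd (hm.mono fun n hn => hn.le)
  calc dist (ulim u fun n => f (m + n)) z ≤ ε / 2 := hle
    _ < ε := by linarith


/-- the `u`-limit of the orbit of `p`. -/
noncomputable def phi (u : Ultrafilter ℕ) (T : X → X) (p : X) : X := ulim u fun n => T^[n] p

theorem tendsto_phi (u : Ultrafilter ℕ) (T : X → X) (p : X) :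
    Tendsto (fun n => T^[n] p) ↑u (𝓝 (phi u T p)) := tendsto_ulim u _

theorem iter_phi {T : X → X} (hT : Continuous T) (u : Ultrafilter ℕ) (m : ℕ) (p : X) :
    T^[m] (phi u T p) = ulim u fun n => T^[m + n] p := by
  have h : Tendsto (fun n => T^[m + n] p) ↑u (𝓝 (T^[m] (phi u T p))) := by
    have h := ((hT.iterate m).tendsto _).comp (tendsto_phi u T p)
    have he : (fun n : ℕ => T^[m + n] p) = fun n => T^[m] (T^[n] p) :=
      funext fun n => Function.iterate_add_apply T m n p
    rw [he]; exact h
  exact (ulim_eq h).symm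

theorem phi_phi {u : Ultrafilter ℕ} (hu : u + u = u) {T : X → X} (hT : Continuous T) (p : X) :
    phi u T (phi u T p) = phi u T p := by
  apply ulim_eq
  have he : (fun m => T^[m] (phi u T p)) = fun m => ulim u fun n => T^[m + n] p :=
    funext fun m => iter_phi hT u m p
  rw [he]
  exact tendsto_ulim_add hu fun s => T^[s] p

theorem tendsto_iter_add_phi {T : X → X} (hT : Continuous T) (u : Ultrafilter ℕ) (m : ℕ)
    (p : X) : Tendsto (fun t => T^[m + t] p) ↑u (𝓝 (T^[m] (phi u T p))) := by
  have h := ((hT.iterate m).tendsto _).comp (tendsto_phi u T p)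
  have he : (fun t => T^[m + t] p) = fun t => T^[m] (T^[t] p) :=
    funext fun t => Function.iterate_add_apply T m t p
  rw [he]; exact h

theorem u_mem_infinite {u : Ultrafilter ℕ} (hu : u + u = u)
    (h1 : {n : ℕ | 1 ≤ n} ∈ u) : ∀ A ∈ u, A.Infinite := by
  intro A hA
  by_contra hni
  rw [Set.not_infinite] at hni
  have hfin := hni
  obtain ⟨a, _, hpure⟩ := Ultrafilter.eq_pure_of_finite_mem hfin hA
  have haa : a + a = a := by
    have hm : ∀ᶠ m in ↑((pure a : Ultrafilter ℕ) + pure a), m = a := by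
      rw [hpure] at hu; rw [hu]; exact eventually_pure.mpr rfl
    rw [Ultrafilter.eventually_add] at hm
    simpa using hm
  have ha0 : a = 0 := by omega
  rw [hpure, ha0] at h1
  simpa using h1

theorem phi_distal_fixed {u : Ultrafilter ℕ} (hu : u + u = u)
    (hinf : ∀ A ∈ u, A.Infinite) {T : X → X} (hT : Continuous T) {q : X}
    (hq : ∀ y ∈ closure (Set.range fun n : ℕ => T^[n] q), y ≠ q →
      0 < liminf (fun n : ℕ => dist (T^[n] q) (T^[n] y)) atTop) :
    phi u T q = q := by
  by_contra hne
  set w := phi u T q with hw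
  have hwcl : w ∈ closure (Set.range fun n : ℕ => T^[n] q) :=
    mem_closure_of_tendsto (tendsto_phi u T q) (Eventually.of_forall fun n => mem_range_self n)
  have hpos := hq w hwcl hne
  set l := liminf (fun n : ℕ => dist (T^[n] q) (T^[n] w)) atTop with hl
  -- dist tends to 0 along u
  have hd : Tendsto (fun n => dist (T^[n] q) (T^[n] w)) ↑u (𝓝 0) := by
    have h1 : Tendsto (fun n => T^[n] q) ↑u (𝓝 w) := tendsto_phi u T q
    have h2 : Tendsto (fun n => T^[n] w) ↑u (𝓝 w) := by
      have := tendsto_phi u T w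
      rwa [show phi u T w = w from by rw [hw]; exact phi_phi hu hT q] at this
    have := h1.dist h2
    rwa [dist_self] at this
  have hA : {n : ℕ | dist (T^[n] q) (T^[n] w) < l / 2} ∈ u := by
    have : ∀ᶠ n in ↑u, dist (T^[n] q) (T^[n] w) < l / 2 :=
      hd.eventually (gt_mem_nhds (by linarith))
    exact this
  have hAinf := hinf _ hA
  have hfreq : ∃ᶠ n in atTop, dist (T^[n] q) (T^[n] w) ≤ l / 2 := by
    rw [frequently_atTop]
    intro N
    obtain ⟨m, hm, hmN⟩ := hAinf.exists_gt N
    exact ⟨m, hmN.le, hm.le⟩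
  have : l ≤ l / 2 := by
    exact liminf_le_of_frequently_le hfreq
      (Filter.isBoundedUnder_of ⟨0, fun n => dist_nonneg⟩)
  linarith


variable {T : X → X}


variable {X : Type*} [MetricSpace X] [CompactSpace X] {T : X → X}

/-- the set of separation times of the configuration `(x, U)` at level `δ`. -/
def Nset (T : X → X) (δ : ℝ) {k : ℕ} (x : Fin (k + 1) → X) (U : Fin (k + 1) → Set X) : Set ℕ :=
  {m | ∃ y : Fin (k + 1) → X, (∀ i, y i ∈ U i) ∧ ∀ i, δ < dist (T^[m] (x i)) (T^[m] (y i))}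

theorem thick_Nset (hT : Continuous T) (hTs : Function.Surjective T) {δ : ℝ} (hδ : 0 < δ)
    (hS : ∀ (k : ℕ) (x : Fin (k + 1) → X) (U : Fin (k + 1) → Set X),
      (∀ i, IsOpen (U i) ∧ x i ∈ U i) →
      ∃ y, (∀ i, y i ∈ U i) ∧ ∃ n, δ < minDist T x y n)
    {k : ℕ} (x : Fin (k + 1) → X) (U : Fin (k + 1) → Set X)
    (hU : ∀ i, IsOpen (U i) ∧ x i ∈ U i) (L : ℕ) :
    ∃ a : ℕ, ∀ j ≤ L, a + j ∈ Nset T δ x U := by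
  classical
  set K := (k + 1) * (L + 1) with hK
  have hsur : ∀ j : ℕ, Function.Surjective (T^[j]) := fun j => hTs.iterate j
  have hpre : ∀ (i : Fin (k + 1)) (j : ℕ), ∃ p : X, T^[j] p = x i := fun i j => hsur j (x i)
  choose pre hpre using hpre
  set c : X := x 0 with hc
  set B : Set X := ⋂ t ∈ Finset.range (L + 1), T^[t] ⁻¹' Metric.ball (T^[t] c) δ with hB
  have hBopen : IsOpen B := by
    refine isOpen_biInter_finset fun t _ => ?_
    exact (hT.iterate t).isOpen_preimage _ isOpen_ball
  have hcB : c ∈ B := by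
    rw [hB]
    refine Set.mem_biInter fun t _ => ?_
    simpa using hδ
  set P : Fin (K + 1) → X := fun s =>
    if h : (s : ℕ) < K then pre ⟨(s : ℕ) % (k + 1), Nat.mod_lt _ (Nat.succ_pos k)⟩
      ((s : ℕ) / (k + 1)) else c with hP
  set W : Fin (K + 1) → Set X := fun s =>
    if h : (s : ℕ) < K then
      T^[(s : ℕ) / (k + 1)] ⁻¹' U ⟨(s : ℕ) % (k + 1), Nat.mod_lt _ (Nat.succ_pos k)⟩
    else B with hW
  have hPW : ∀ s, IsOpen (W s) ∧ P s ∈ W s := by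
    intro s
    by_cases h : (s : ℕ) < K
    · have hWs : W s = T^[(s : ℕ) / (k + 1)] ⁻¹'
          U ⟨(s : ℕ) % (k + 1), Nat.mod_lt _ (Nat.succ_pos k)⟩ := by
        rw [hW]; exact dif_pos h
      have hPs : P s = pre ⟨(s : ℕ) % (k + 1), Nat.mod_lt _ (Nat.succ_pos k)⟩
          ((s : ℕ) / (k + 1)) := by
        rw [hP]; exact dif_pos h
      rw [hWs, hPs]
      refine ⟨(hT.iterate _).isOpen_preimage _ (hU _).1, ?_⟩
      show T^[(s : ℕ) / (k + 1)] _ ∈ U _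
      rw [hpre]
      exact (hU _).2
    · have hWs : W s = B := by rw [hW]; exact dif_neg h
      have hPs : P s = c := by rw [hP]; exact dif_neg h
      rw [hWs, hPs]
      exact ⟨hBopen, hcB⟩
  obtain ⟨y', hy'mem, n, hn⟩ := hS K P W hPW
  have hsep : ∀ s, δ < dist (T^[n] (P s)) (T^[n] (y' s)) := fun s =>
    lt_of_lt_of_le hn (Finset.inf'_le _ (Finset.mem_univ s))
  have hKlt : K < K + 1 := Nat.lt_succ_self K
  -- forcing : L < n
  have hnL : L < n := by
    by_contra hcon
    push_neg at hcon
    have hs := hsep ⟨K, hKlt⟩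
    have hPs : P ⟨K, hKlt⟩ = c := by rw [hP]; exact dif_neg (lt_irrefl K)
    have hWs : y' ⟨K, hKlt⟩ ∈ B := by
      have h2 := hy'mem ⟨K, hKlt⟩
      have hWB : W ⟨K, hKlt⟩ = B := by rw [hW]; exact dif_neg (lt_irrefl K)
      rwa [hWB] at h2
    rw [hPs] at hs
    rw [hB] at hWs
    have hmem := Set.mem_iInter₂.mp hWs n (Finset.mem_range.mpr (Nat.lt_succ_of_le hcon))
    rw [Set.mem_preimage, Metric.mem_ball] at hmem
    rw [dist_comm] at hmem
    exact absurd hs (not_lt.mpr hmem.le)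
  -- extraction
  refine ⟨n - L, fun j hj => ?_⟩
  set j' := L - j with hj'def
  have hj'L : j' ≤ L := Nat.sub_le L j
  have hj'n : j' ≤ n := hj'L.trans hnL.le
  have harith : n - L + j = n - j' := by omega
  have hslot : ∀ i : Fin (k + 1), j' * (k + 1) + (i : ℕ) < K := by
    intro i
    have hi := i.isLt
    have h1 : j' * (k + 1) + (i : ℕ) < j' * (k + 1) + (k + 1) := by omega
    have h2 : j' * (k + 1) + (k + 1) ≤ L * (k + 1) + (k + 1) := by
      have := Nat.mul_le_mul_right (k + 1) hj'L
      omega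
    have h3 : L * (k + 1) + (k + 1) = (k + 1) * (L + 1) := by ring
    omega
  have hmod : ∀ i : Fin (k + 1), (j' * (k + 1) + (i : ℕ)) % (k + 1) = (i : ℕ) := by
    intro i
    have he : j' * (k + 1) + (i : ℕ) = (i : ℕ) + (k + 1) * j' := by ring
    rw [he, Nat.add_mul_mod_self_left, Nat.mod_eq_of_lt i.isLt]
  have hdiv : ∀ i : Fin (k + 1), (j' * (k + 1) + (i : ℕ)) / (k + 1) = j' := by
    intro i
    have he : j' * (k + 1) + (i : ℕ) = (i : ℕ) + (k + 1) * j' := by ring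
    rw [he, Nat.add_mul_div_left _ _ (Nat.succ_pos k), Nat.div_eq_of_lt i.isLt, zero_add]
  set slot : Fin (k + 1) → Fin (K + 1) := fun i =>
    ⟨j' * (k + 1) + (i : ℕ), (hslot i).trans hKlt⟩ with hslotdef
  set y : Fin (k + 1) → X := fun i => T^[j'] (y' (slot i)) with hy
  refine ⟨y, ?_, ?_⟩
  · intro i
    have hfin : (⟨(j' * (k + 1) + (i : ℕ)) % (k + 1),
        Nat.mod_lt _ (Nat.succ_pos k)⟩ : Fin (k + 1)) = i := Fin.ext (hmod i)
    have hWs : y' (slot i) ∈ (if h : j' * (k + 1) + (i : ℕ) < K then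
        T^[(j' * (k + 1) + (i : ℕ)) / (k + 1)] ⁻¹'
          U ⟨(j' * (k + 1) + (i : ℕ)) % (k + 1), Nat.mod_lt _ (Nat.succ_pos k)⟩
        else B) := hy'mem (slot i)
    rw [dif_pos (hslot i), hdiv i, hfin] at hWs
    exact hWs
  · intro i
    have hfin : (⟨(j' * (k + 1) + (i : ℕ)) % (k + 1),
        Nat.mod_lt _ (Nat.succ_pos k)⟩ : Fin (k + 1)) = i := Fin.ext (hmod i)
    have hs := hsep (slot i)
    have hPs : P (slot i) = (if h : j' * (k + 1) + (i : ℕ) < K then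
        pre ⟨(j' * (k + 1) + (i : ℕ)) % (k + 1), Nat.mod_lt _ (Nat.succ_pos k)⟩
          ((j' * (k + 1) + (i : ℕ)) / (k + 1)) else c) := rfl
    rw [dif_pos (hslot i), hdiv i, hfin] at hPs
    rw [hPs] at hs
    have hnsplit : n = (n - j') + j' := (Nat.sub_add_cancel hj'n).symm
    rw [hnsplit, Function.iterate_add_apply, Function.iterate_add_apply, hpre] at hs
    rw [harith]
    exact hs




theorem exists_FS_subset_of_thick {N : Set ℕ} (hthick : ∀ L : ℕ, ∃ a : ℕ, ∀ j ≤ L, a + j ∈ N) :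
    ∃ b : Stream' ℕ, (∀ m ∈ Hindman.FS b, m ∈ N) ∧ ∀ m ∈ Hindman.FS b, 1 ≤ m := by
  classical
  choose A hA using hthick
  -- partial sums S with b r := A (S r + 1) + 1
  let S : ℕ → ℕ := fun r => Nat.rec 0 (fun _ s => s + (A (s + 1) + 1)) r
  let b : ℕ → ℕ := fun r => A (S r + 1) + 1
  have hSsucc : ∀ r, S (r + 1) = S r + b r := fun r => rfl
  have hb1 : ∀ r, 1 ≤ b r := fun r => Nat.le_add_left 1 _
  have hSmono : ∀ r, S r ≤ S (r + 1) := fun r => by rw [hSsucc]; omega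
  -- block property : b r + s ∈ N for s ≤ S r
  have hblock : ∀ r s, s ≤ S r → b r + s ∈ N := by
    intro r s hs
    have := hA (S r + 1) (1 + s) (by omega)
    have he : A (S r + 1) + (1 + s) = b r + s := by simp only [b]; omega
    rwa [he] at this
  -- the stream
  refine ⟨b, ?_, ?_⟩
  · -- key bound : m ∈ FS (shifted stream) → ∃ j ≥ s, b j ≤ m ∧ m + S s ≤ S (j+1)
    suffices hkey : ∀ (a : Stream' ℕ) (m : ℕ), m ∈ Hindman.FS a → ∀ s : ℕ,
        a = (fun t => b (s + t)) → ∃ j, s ≤ j ∧ b j ≤ m ∧ m + S s ≤ S (j + 1) by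
      intro m hm
      obtain ⟨j, _, hbj, hsum⟩ := hkey _ m hm 0 (funext fun t => by simp)
      have hSj : m + S 0 ≤ S j + b j := by rw [← hSsucc]; exact hsum
      have hS0 : S 0 = 0 := rfl
      have hms : m = b j + (m - b j) := by omega
      rw [hms]
      exact hblock j (m - b j) (by omega)
    intro a m hm
    induction hm with
    | head' a =>
      intro s hs
      refine ⟨s, le_refl s, ?_, ?_⟩
      · rw [hs]; exact le_refl _
      · rw [hs]
        have hh : Stream'.head (fun t => b (s + t)) = b s := rfl
        rw [hh, hSsucc]
        omega
    | tail' a m hm ih =>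
      intro s hs
      have htail : a.tail = fun t => b ((s + 1) + t) := by
        funext t
        show a (t + 1) = _
        rw [hs]
        show b (s + (t + 1)) = b ((s + 1) + t)
        have : s + (t + 1) = (s + 1) + t := by omega
        rw [this]
      obtain ⟨j, hj1, hj2, hj3⟩ := ih (s + 1) htail
      exact ⟨j, by omega, hj2, by have := hSmono s; omega⟩
    | cons' a m hm ih =>
      intro s hs
      have htail : a.tail = fun t => b ((s + 1) + t) := by
        funext t
        show a (t + 1) = _
        rw [hs]
        show b (s + (t + 1)) = b ((s + 1) + t)
        have : s + (t + 1) = (s + 1) + t := by omega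
        rw [this]
      obtain ⟨j, hj1, hj2, hj3⟩ := ih (s + 1) htail
      have hhead : a.head = b s := by rw [hs]; rfl
      refine ⟨j, by omega, by omega, ?_⟩
      rw [hhead]
      have hS1 : S (s + 1) = S s + b s := hSsucc s
      omega
  · -- lower bound 1 ≤ m
    suffices hkey : ∀ (a : Stream' ℕ) (m : ℕ), m ∈ Hindman.FS a →
        (∀ t, 1 ≤ a t) → 1 ≤ m by
      intro m hm
      exact hkey b m hm hb1
    intro a m hm
    induction hm with
    | head' a => intro h; exact h 0
    | tail' a m hm ih =>
      intro h
      exact ih fun t => h (t + 1)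
    | cons' a m hm ih =>
      intro h
      have := ih fun t => h (t + 1)
      have hh : 1 ≤ a.head := h 0
      show 1 ≤ a.head + m
      omega


theorem main_step14 {T : X → X}
    (hT : Continuous T) (hTs : Function.Surjective T)
    (hd : Dense {x : X | IsDistalPoint T x}) {δ δ' : ℝ} (h0 : 0 < δ') (hlt : δ' < δ)
    (hS : ∀ (k : ℕ) (x : Fin (k + 1) → X) (U : Fin (k + 1) → Set X),
      (∀ i, IsOpen (U i) ∧ x i ∈ U i) →
      ∃ y, (∀ i, y i ∈ U i) ∧ ∃ n, δ < minDist T x y n)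
    (k : ℕ) (x : Fin (k + 1) → X) (U : Fin (k + 1) → Set X)
    (hU : ∀ i, IsOpen (U i) ∧ x i ∈ U i) :
    ∃ y, (∀ i, y i ∈ U i) ∧ δ' < limsup (fun n : ℕ => minDist T x y n) atTop := by
  classical
  have hδ : 0 < δ := h0.trans hlt
  set γ : ℝ := (δ - δ') / 4 with hγdef
  have hγ : 0 < γ := by rw [hγdef]; linarith
  obtain ⟨b, hbN, hb1⟩ := exists_FS_subset_of_thick (thick_Nset hT hTs hδ hS x U hU)
  obtain ⟨u, hu, huFS⟩ := Hindman.exists_idempotent_ultrafilter_le_FS b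
  have hNu : ∀ᶠ m in ↑u, m ∈ Nset T δ x U := huFS.mono fun m hm => hbN m hm
  have h1u : {n : ℕ | 1 ≤ n} ∈ u := by
    have : ∀ᶠ m in ↑u, 1 ≤ m := huFS.mono fun m hm => hb1 m hm
    exact this
  have hinf : ∀ A ∈ u, A.Infinite := u_mem_infinite hu h1u
  have hPev : ∀ᶠ m in ↑u, ∀ i, dist (T^[m] (x i)) (T^[m] (phi u T (x i))) < γ := by
    rw [eventually_all]
    intro i
    have h1 : Tendsto (fun m => T^[m] (x i)) ↑u (𝓝 (phi u T (x i))) := tendsto_phi u T (x i)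
    have h2 : Tendsto (fun m => T^[m] (phi u T (x i))) ↑u (𝓝 (phi u T (x i))) := by
      have h3 := tendsto_phi u T (phi u T (x i))
      rwa [phi_phi hu hT] at h3
    have h3 := h1.dist h2
    rw [dist_self] at h3
    exact h3.eventually (gt_mem_nhds hγ)
  obtain ⟨m₀, hm₀N, hm₀P⟩ := (hNu.and hPev).exists
  obtain ⟨y₀, hy₀U, hy₀sep⟩ := hm₀N
  have hq : ∀ i, ∃ z : X, IsDistalPoint T z ∧ z ∈ U i ∧ δ < dist (T^[m₀] (x i)) (T^[m₀] z) := by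
    intro i
    have hopen : IsOpen (U i ∩ T^[m₀] ⁻¹' {z | δ < dist (T^[m₀] (x i)) z}) := by
      refine ((hU i).1).inter ((hT.iterate m₀).isOpen_preimage _ ?_)
      exact isOpen_lt continuous_const (Continuous.dist continuous_const continuous_id)
    have hne : (U i ∩ T^[m₀] ⁻¹' {z | δ < dist (T^[m₀] (x i)) z}).Nonempty :=
      ⟨y₀ i, hy₀U i, hy₀sep i⟩
    obtain ⟨z, hz1, hz2⟩ := hd.exists_mem_open hopen hne
    exact ⟨z, hz1, hz2.1, hz2.2⟩
  choose q hqD hqU hqsep using hq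
  have hqfix : ∀ i, phi u T (q i) = q i := fun i => phi_distal_fixed hu hinf hT (hqD i)
  have hall : ∀ᶠ t in ↑u, ∀ i,
      dist (T^[m₀ + t] (q i)) (T^[m₀] (q i)) < γ ∧
      δ - 2*γ < dist (T^[m₀ + t] (x i)) (T^[m₀] (q i)) := by
    rw [eventually_all]
    intro i
    refine Eventually.and ?_ ?_
    · have h1 : Tendsto (fun t => T^[m₀ + t] (q i)) ↑u (𝓝 (T^[m₀] (q i))) := by
        have h2 := tendsto_iter_add_phi hT u m₀ (q i)
        rwa [hqfix i] at h2
      have h2 := h1.dist (tendsto_const_nhds (x := T^[m₀] (q i)))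
      rw [dist_self] at h2
      exact h2.eventually (gt_mem_nhds hγ)
    · have h1 : Tendsto (fun t => T^[m₀ + t] (x i)) ↑u (𝓝 (T^[m₀] (phi u T (x i)))) :=
        tendsto_iter_add_phi hT u m₀ (x i)
      have h2 := h1.dist (tendsto_const_nhds (x := T^[m₀] (q i)))
      have hval : δ - γ ≤ dist (T^[m₀] (phi u T (x i))) (T^[m₀] (q i)) := by
        have ht := dist_triangle (T^[m₀] (x i)) (T^[m₀] (phi u T (x i))) (T^[m₀] (q i))
        have hs := hqsep i
        have hp := hm₀P i
        linarith
      exact h2.eventually (lt_mem_nhds (by linarith))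
  have hGinf : {t : ℕ | ∀ i, dist (T^[m₀ + t] (q i)) (T^[m₀] (q i)) < γ ∧
      δ - 2*γ < dist (T^[m₀ + t] (x i)) (T^[m₀] (q i))}.Infinite := hinf _ hall
  refine ⟨q, hqU, ?_⟩
  have hkey : δ - 3*γ = δ' + γ := by rw [hγdef]; ring
  have hfreq : ∃ᶠ s in atTop, δ' + γ ≤ minDist T x q s := by
    rw [frequently_atTop]
    intro N
    obtain ⟨t, ht, htN⟩ := hGinf.exists_gt N
    refine ⟨m₀ + t, by omega, ?_⟩
    have hlt2 : δ' + γ < minDist T x q (m₀ + t) := by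
      refine (Finset.lt_inf'_iff _).mpr fun i _ => ?_
      obtain ⟨hR, hE⟩ := ht i
      have h4 : dist (T^[m₀+t] (x i)) (T^[m₀] (q i)) ≤
          dist (T^[m₀+t] (x i)) (T^[m₀+t] (q i)) + dist (T^[m₀+t] (q i)) (T^[m₀] (q i)) :=
        dist_triangle _ _ _
      linarith
    exact hlt2.le
  obtain ⟨C, hC⟩ : ∃ C : ℝ, ∀ p z : X, dist p z ≤ C := by
    have hb := (isCompact_univ (X := X)).isBounded
    rw [Metric.isBounded_iff] at hb
    obtain ⟨C, hC⟩ := hb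
    exact ⟨C, fun p z => hC (Set.mem_univ p) (Set.mem_univ z)⟩
  have hbdd : IsBoundedUnder (· ≤ ·) atTop (fun s => minDist T x q s) := by
    refine isBoundedUnder_of ⟨C, fun s => ?_⟩
    exact (Finset.inf'_le _ (Finset.mem_univ 0)).trans (hC _ _)
  have hle := le_limsup_of_frequently_le hfreq hbdd
  linarith

end AuxStmt14

/-- If the set of distal points is dense, then `𝕃_{m,r} = 𝕃̄_{m,r}`. -/
theorem stmt14 {X : Type*} [MetricSpace X] [CompactSpace X] [Nontrivial X]
    (hperf : ∀ x : X, (𝓝[≠] x).NeBot)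
    {T : X → X} (hTc : Continuous T) (hTs : Function.Surjective T)
    (hd : Dense {x : X | IsDistalPoint T x}) :
    LyapMR T = LyapMRbar T := by
  classical
  obtain ⟨C, hC⟩ : ∃ C : ℝ, ∀ p z : X, dist p z ≤ C := by
    have hb := (isCompact_univ (X := X)).isBounded
    rw [Metric.isBounded_iff] at hb
    obtain ⟨C, hC⟩ := hb
    exact ⟨C, fun p z => hC (Set.mem_univ p) (Set.mem_univ z)⟩
  set S : Set ℝ := {δ : ℝ | 0 < δ ∧ ∀ (k : ℕ) (x : Fin (k + 1) → X) (U : Fin (k + 1) → Set X),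
    (∀ i, IsOpen (U i) ∧ x i ∈ U i) →
    ∃ y : Fin (k + 1) → X, (∀ i, y i ∈ U i) ∧ ∃ n : ℕ, δ < minDist T x y n} with hSdef
  set Sb : Set ℝ := {δ : ℝ | 0 < δ ∧ ∀ (k : ℕ) (x : Fin (k + 1) → X) (U : Fin (k + 1) → Set X),
    (∀ i, IsOpen (U i) ∧ x i ∈ U i) →
    ∃ y : Fin (k + 1) → X, (∀ i, y i ∈ U i) ∧
      δ < limsup (fun n : ℕ => minDist T x y n) atTop} with hSbdef
  have hLyap : LyapMR T = sSup S := rfl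
  have hLyapb : LyapMRbar T = sSup Sb := rfl
  -- S is bounded above by C
  have hSub : ∀ δ ∈ S, δ ≤ C := by
    rintro δ ⟨hδ0, hδ⟩
    obtain ⟨p⟩ := (inferInstance : Nonempty X)
    obtain ⟨y, -, n, hn⟩ := hδ 0 (fun _ => p) (fun _ => Set.univ)
      (fun i => ⟨isOpen_univ, Set.mem_univ p⟩)
    have h1 : minDist T (fun _ : Fin 1 => p) y n ≤ C :=
      (Finset.inf'_le _ (Finset.mem_univ 0)).trans (hC _ _)
    linarith
  have hSbdd : BddAbove S := ⟨C, hSub⟩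
  -- Sb ⊆ S
  have hsub : Sb ⊆ S := by
    rintro δ ⟨hδ0, hδ⟩
    refine ⟨hδ0, fun k x U hU => ?_⟩
    obtain ⟨y, hyU, hy⟩ := hδ k x U hU
    refine ⟨y, hyU, ?_⟩
    by_contra hcon
    push_neg at hcon
    have : limsup (fun n : ℕ => minDist T x y n) atTop ≤ δ := by
      refine limsup_le_of_le ?_ (Eventually.of_forall hcon)
      refine isCoboundedUnder_le_of_le atTop (x := 0) fun n => ?_
      exact Finset.le_inf' _ _ fun i _ => dist_nonneg
    linarith
  have hSbub : BddAbove Sb := ⟨C, fun δ hδ => hSub δ (hsub hδ)⟩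
  rw [hLyap, hLyapb]
  rcases Set.eq_empty_or_nonempty S with hSe | hSne
  · have hSbe : Sb = ∅ := Set.eq_empty_of_subset_empty (hSe ▸ hsub)
    rw [hSe, hSbe]
  · refine le_antisymm ?_ ?_
    · -- sSup S ≤ sSup Sb
      refine csSup_le hSne fun δ hδS => ?_
      by_contra hcon
      push_neg at hcon
      have hδ0 : 0 < δ := hδS.1
      set δ' : ℝ := (max (sSup Sb) 0 + δ) / 2 with hδ'def
      have hδ'lt : δ' < δ := by
        have h1 : max (sSup Sb) 0 < δ := by
          rcases max_cases (sSup Sb) 0 with ⟨h, -⟩ | ⟨h, -⟩ <;> rw [h]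
          · exact hcon
          · exact hδ0
        rw [hδ'def]; linarith
      have hδ'0 : 0 < δ' := by
        have : (0:ℝ) ≤ max (sSup Sb) 0 := le_max_right _ _
        rw [hδ'def]; linarith
      have hδ'Sb : δ' ∈ Sb :=
        ⟨hδ'0, fun k x U hU => main_step14 hTc hTs hd hδ'0 hδ'lt hδS.2 k x U hU⟩
      have : δ' ≤ sSup Sb := le_csSup hSbub hδ'Sb
      have h2 : sSup Sb < δ' := by
        have h3 : sSup Sb ≤ max (sSup Sb) 0 := le_max_left _ _
        rw [hδ'def]
        have h4 : max (sSup Sb) 0 < δ := by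
          rcases max_cases (sSup Sb) 0 with ⟨h, -⟩ | ⟨h, -⟩ <;> rw [h]
          · exact hcon
          · exact hδ0
        linarith
      linarith
    · -- sSup Sb ≤ sSup S
      rcases Set.eq_empty_or_nonempty Sb with hSbe | hSbne
      · rw [hSbe]
        rw [Real.sSup_empty]
        obtain ⟨δ, hδ⟩ := hSne
        exact le_trans hδ.1.le (le_csSup hSbdd hδ)
      · exact csSup_le_csSup hSbdd hSbne hsub
end

section
/- Let (X,T) be a nontrivial weakly mixing dynamical system. Then the Lyapunov numbers satisfy 𝕃_{m,d} = 𝕃̄_{m,d} = diam(X) and 𝕃_{m,r} = 𝕃̄_{m,r} > 0. -/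
open Filter Topology Set Metric

set_option linter.unusedSectionVars false

section WMLemmas

variable {X : Type*} [MetricSpace X] [CompactSpace X] [Nontrivial X] {T : X → X}

lemma iter_prod (T : X → X) : ∀ (n : ℕ) (p : X × X),
    (fun q : X × X => (T q.1, T q.2))^[n] p = (T^[n] p.1, T^[n] p.2) := by
  intro n
  induction n with
  | zero => intro p; simp
  | succ n ih =>
    intro p
    rw [Function.iterate_succ_apply, ih, Function.iterate_succ_apply,
      Function.iterate_succ_apply]

lemma wm_pair_s15 (hwm : WeaklyMixing T) {U₁ U₂ V₁ V₂ : Set X} (h1 : Opene U₁) (h2 : Opene U₂)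
    (h3 : Opene V₁) (h4 : Opene V₂) :
    ∃ n : ℕ, (U₁ ∩ T^[n] ⁻¹' V₁).Nonempty ∧ (U₂ ∩ T^[n] ⁻¹' V₂).Nonempty := by
  obtain ⟨n, p, hp1, hp2⟩ := hwm (U₁ ×ˢ U₂) (V₁ ×ˢ V₂)
    ⟨h1.1.prod h2.1, h1.2.prod h2.2⟩ ⟨h3.1.prod h4.1, h3.2.prod h4.2⟩
  have hp2' : (T^[n] p.1, T^[n] p.2) ∈ V₁ ×ˢ V₂ := by
    have := hp2
    simp only [Set.mem_preimage] at this
    rwa [iter_prod T n p] at this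
  exact ⟨n, ⟨p.1, hp1.1, hp2'.1⟩, ⟨p.2, hp1.2, hp2'.2⟩⟩

lemma wm_single (hwm : WeaklyMixing T) {U V : Set X} (h1 : Opene U) (h2 : Opene V) :
    ∃ n : ℕ, (U ∩ T^[n] ⁻¹' V).Nonempty := by
  obtain ⟨n, h, _⟩ := wm_pair_s15 hwm h1 h1 h2 h2
  exact ⟨n, h⟩

lemma master (hTc : Continuous T) (hwm : WeaklyMixing T) :
    ∀ L : List (Set X × Set X), (∀ p ∈ L, Opene p.1 ∧ Opene p.2) →
    ∃ U V : Set X, Opene U ∧ Opene V ∧ ∀ n : ℕ, (U ∩ T^[n] ⁻¹' V).Nonempty →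
      ∀ p ∈ L, (p.1 ∩ T^[n] ⁻¹' p.2).Nonempty := by
  intro L
  induction L with
  | nil =>
    intro _
    exact ⟨Set.univ, Set.univ, ⟨isOpen_univ, Set.univ_nonempty⟩,
      ⟨isOpen_univ, Set.univ_nonempty⟩, fun n _ p hp => absurd hp List.not_mem_nil⟩
  | cons q L ih =>
    intro h
    obtain ⟨U₁, V₁, hU₁, hV₁, hprop⟩ := ih (fun p hp => h p (List.mem_cons_of_mem q hp))
    obtain ⟨hq1, hq2⟩ := h q List.mem_cons_self
    obtain ⟨n, ⟨u, hu, hu2⟩, ⟨v, hv, hv2⟩⟩ := wm_pair_s15 hwm hU₁ hV₁ hq1 hq2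
    refine ⟨U₁ ∩ T^[n] ⁻¹' q.1, V₁ ∩ T^[n] ⁻¹' q.2,
      ⟨hU₁.1.inter (hq1.1.preimage (hTc.iterate n)), ⟨u, hu, hu2⟩⟩,
      ⟨hV₁.1.inter (hq2.1.preimage (hTc.iterate n)), ⟨v, hv, hv2⟩⟩, ?_⟩
    rintro m ⟨w, ⟨hw1, hw2⟩, hw3⟩ p hp
    have hw3' : T^[m] w ∈ V₁ ∩ T^[n] ⁻¹' q.2 := hw3
    rcases List.mem_cons.mp hp with rfl | hp'
    · refine ⟨T^[n] w, hw2, ?_⟩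
      have : T^[n] (T^[m] w) ∈ p.2 := hw3'.2
      simp only [Set.mem_preimage]
      rw [← Function.iterate_add_apply, add_comm, Function.iterate_add_apply] at this
      exact this
    · exact hprop m ⟨w, hw1, hw3'.1⟩ p hp'

lemma mtList (hTc : Continuous T) (hTs : Function.Surjective T) (hwm : WeaklyMixing T)
    (L : List (Set X × Set X)) (hL : ∀ p ∈ L, Opene p.1 ∧ Opene p.2) (N : ℕ) :
    ∃ n : ℕ, N < n ∧ ∀ p ∈ L, (p.1 ∩ T^[n] ⁻¹' p.2).Nonempty := by
  obtain ⟨U, V, hU, hV, hprop⟩ := master hTc hwm L hL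
  have hV' : Opene (T^[N+1] ⁻¹' V) :=
    ⟨hV.1.preimage (hTc.iterate (N+1)), hV.2.preimage (hTs.iterate (N+1))⟩
  obtain ⟨n₀, w, hw1, hw2⟩ := wm_single hwm hU hV'
  refine ⟨N + 1 + n₀, by omega, hprop _ ⟨w, hw1, ?_⟩⟩
  simp only [Set.mem_preimage] at hw2 ⊢
  rw [Function.iterate_add_apply T (N+1) n₀ w]
  exact hw2

lemma mtIdx (hTc : Continuous T) (hTs : Function.Surjective T) (hwm : WeaklyMixing T)
    {ι : Type*} [Fintype ι] (P Q : ι → Set X) (h1 : ∀ i, Opene (P i))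
    (h2 : ∀ i, Opene (Q i)) (N : ℕ) :
    ∃ n : ℕ, N < n ∧ ∀ i, ((P i) ∩ T^[n] ⁻¹' (Q i)).Nonempty := by
  have hL : ∀ p ∈ ((Finset.univ : Finset ι).toList.map fun i => (P i, Q i)),
      Opene p.1 ∧ Opene p.2 := by
    rintro p hp
    obtain ⟨i, _, rfl⟩ := List.mem_map.1 hp
    exact ⟨h1 i, h2 i⟩
  obtain ⟨n, hn, hprop⟩ := mtList hTc hTs hwm _ hL N
  exact ⟨n, hn, fun i => hprop (P i, Q i)
    (List.mem_map.2 ⟨i, Finset.mem_toList.2 (Finset.mem_univ i), rfl⟩)⟩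

end WMLemmas
section Utils

variable {X : Type*} [MetricSpace X] [CompactSpace X] [Nontrivial X] {T : X → X}

lemma net_exists {r : ℝ} (hr : 0 < r) : ∃ F : Finset X, ∀ x : X, ∃ c ∈ F, dist x c < r := by
  obtain ⟨F, hF⟩ := isCompact_univ.elim_finite_subcover (fun c : X => Metric.ball c r)
    (fun c => Metric.isOpen_ball) (fun x _ => Set.mem_iUnion.2 ⟨x, Metric.mem_ball_self hr⟩)
  refine ⟨F, fun x => ?_⟩
  have := hF (Set.mem_univ x)
  simp only [Set.mem_iUnion, exists_prop] at this
  obtain ⟨c, hc, hxc⟩ := this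
  exact ⟨c, hc, Metric.mem_ball.1 hxc⟩

lemma modulus (hTc : Continuous T) (M : ℕ) {ε : ℝ} (hε : 0 < ε) :
    ∃ η > 0, ∀ m ≤ M, ∀ u v : X, dist u v < η → dist (T^[m] u) (T^[m] v) < ε := by
  have h : ∀ m : ℕ, ∃ η > 0, ∀ u v : X, dist u v < η → dist (T^[m] u) (T^[m] v) < ε := by
    intro m
    have huc : UniformContinuous (T^[m]) :=
      CompactSpace.uniformContinuous_of_continuous (hTc.iterate m)
    obtain ⟨η, hη, h⟩ := Metric.uniformContinuous_iff.1 huc ε hε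
    exact ⟨η, hη, fun u v huv => h huv⟩
  choose η hη hprop using h
  refine ⟨(Finset.range (M+1)).inf' ⟨0, Finset.mem_range.2 (Nat.succ_pos M)⟩ η, ?_, ?_⟩
  · exact (Finset.lt_inf'_iff _).2 fun m _ => hη m
  · intro m hm u v huv
    exact hprop m u v (lt_of_lt_of_le huv
      (Finset.inf'_le _ (Finset.mem_range.2 (by omega))))

lemma unif (hTc : Continuous T) {δ δ₁ : ℝ}
    (hδ : ∀ (k : ℕ) (x : Fin (k + 1) → X) (U : Fin (k + 1) → Set X),
      (∀ i, IsOpen (U i) ∧ x i ∈ U i) →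
      ∃ y : Fin (k + 1) → X, (∀ i, y i ∈ U i) ∧ ∃ n : ℕ, δ < minDist T x y n)
    (h1 : δ₁ < δ) (k : ℕ) :
    ∃ M : ℕ, ∀ p : Fin (k+1) → X, ∃ (y : Fin (k+1) → X) (m : ℕ), m ≤ M ∧
      ∀ i, δ₁ < dist (T^[m] (p i)) (T^[m] (y i)) := by
  have h : ∀ p : Fin (k+1) → X, ∃ (y : Fin (k+1) → X) (m : ℕ),
      ∀ i, δ < dist (T^[m] (p i)) (T^[m] (y i)) := by
    intro p
    obtain ⟨y, _, n, hn⟩ := hδ k p (fun _ => Set.univ) (fun i => ⟨isOpen_univ, Set.mem_univ _⟩)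
    simp only [minDist, Finset.lt_inf'_iff] at hn
    exact ⟨y, n, fun i => hn i (Finset.mem_univ i)⟩
  choose y m hm using h
  set O : (Fin (k+1) → X) → Set (Fin (k+1) → X) := fun p =>
    {q | ∀ i, δ₁ < dist (T^[m p] (q i)) (T^[m p] (y p i))} with hO
  have hopen : ∀ p, IsOpen (O p) := by
    intro p
    have hrw : O p = ⋂ i, (fun q : Fin (k+1) → X =>
        dist (T^[m p] (q i)) (T^[m p] (y p i))) ⁻¹' Set.Ioi δ₁ := by
      ext q
      simp [hO]
    rw [hrw]
    exact isOpen_iInter_of_finite fun i =>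
      isOpen_Ioi.preimage (((hTc.iterate (m p)).comp (continuous_apply i)).dist
        continuous_const)
  have hcover : (Set.univ : Set (Fin (k+1) → X)) ⊆ ⋃ p, O p := fun q _ =>
    Set.mem_iUnion.2 ⟨q, fun i => h1.trans (hm q i)⟩
  obtain ⟨s, hs⟩ := isCompact_univ.elim_finite_subcover O hopen hcover
  refine ⟨s.sup m, fun q => ?_⟩
  have := hs (Set.mem_univ q)
  simp only [Set.mem_iUnion, exists_prop] at this
  obtain ⟨p, hps, hq⟩ := this
  exact ⟨y p, m p, Finset.le_sup hps, hq⟩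

lemma nest {ι : Type*} [Fintype ι] [Nonempty ι]
    (φ : ℕ → (ι → X) → ℝ) (V : ι → Set X) (hV : ∀ i, Opene (V i))
    {δ δ₃ δ₂ C : ℝ} (h1 : δ < δ₃) (h2 : δ₃ < δ₂)
    (hloc : ∀ (n : ℕ) (z : ι → X), δ₂ < φ n z →
      ∃ r > 0, ∀ v : ι → X, (∀ i, v i ∈ Metric.closedBall (z i) r) → δ₃ < φ n v)
    (hbd : ∀ (n : ℕ) (v : ι → X), φ n v ≤ C)
    (hQ : ∀ W : ι → Set X, (∀ i, Opene (W i) ∧ W i ⊆ V i) → ∀ N : ℕ,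
      ∃ n : ℕ, N < n ∧ ∃ z : ι → X, (∀ i, z i ∈ W i) ∧ δ₂ < φ n z) :
    ∃ y : ι → X, (∀ i, y i ∈ V i) ∧ δ < limsup (fun n => φ n y) atTop := by
  have step : ∀ (z : ι → X) (r : ℝ), 0 < r → (∀ i, Metric.ball (z i) r ⊆ V i) →
      ∀ N : ℕ, ∃ (n : ℕ) (z' : ι → X) (r' : ℝ), N < n ∧ 0 < r' ∧
        (∀ i, Metric.closedBall (z' i) r' ⊆ Metric.ball (z i) r) ∧
        ∀ v : ι → X, (∀ i, v i ∈ Metric.closedBall (z' i) r') → δ₃ < φ n v := by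
    intro z r hr hzV N
    obtain ⟨n, hn, z', hz', hφ⟩ := hQ (fun i => Metric.ball (z i) r)
      (fun i => ⟨⟨Metric.isOpen_ball, ⟨z i, Metric.mem_ball_self hr⟩⟩, hzV i⟩) N
    obtain ⟨r₁, hr₁, hprop⟩ := hloc n z' hφ
    set mr : ℝ := Finset.univ.inf' Finset.univ_nonempty
      (fun i => (r - dist (z' i) (z i)) / 2) with hmr
    have hm : 0 < mr := (Finset.lt_inf'_iff _).2 fun i _ => by
      have := Metric.mem_ball.1 (hz' i); linarith
    refine ⟨n, z', min r₁ mr, hn, lt_min hr₁ hm, fun i u hu => ?_,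
      fun v hv => hprop v (fun i =>
        Metric.closedBall_subset_closedBall (min_le_left _ _) (hv i))⟩
    have h1' : dist u (z' i) ≤ mr := le_trans (Metric.mem_closedBall.1 hu) (min_le_right _ _)
    have h2' : mr ≤ (r - dist (z' i) (z i)) / 2 := Finset.inf'_le _ (Finset.mem_univ i)
    have h3' : dist (z' i) (z i) < r := Metric.mem_ball.1 (hz' i)
    have h4' : dist u (z i) ≤ dist u (z' i) + dist (z' i) (z i) := dist_triangle _ _ _
    exact Metric.mem_ball.2 (by linarith)
  have init : ∃ (z : ι → X) (r : ℝ), 0 < r ∧ ∀ i, Metric.ball (z i) r ⊆ V i := by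
    have hz : ∀ i, ∃ p, p ∈ V i := fun i => (hV i).2
    choose z hz using hz
    have hball : ∀ i, ∃ ρ > 0, Metric.ball (z i) ρ ⊆ V i := fun i =>
      Metric.isOpen_iff.1 (hV i).1 (z i) (hz i)
    choose ρ hρ hρV using hball
    refine ⟨z, Finset.univ.inf' Finset.univ_nonempty ρ,
      (Finset.lt_inf'_iff _).2 fun i _ => hρ i, fun i =>
      Set.Subset.trans (Metric.ball_subset_ball (Finset.inf'_le _ (Finset.mem_univ i)))
        (hρV i)⟩
  obtain ⟨z₀, r₀, hr₀, hz₀V⟩ := init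
  obtain ⟨n₁, z₁, r₁, hn₁, hr₁, hsub₁, hφ₁⟩ := step z₀ r₀ hr₀ hz₀V 0
  have step' : ∀ s : {t : ℕ × (ι → X) × ℝ // 0 < t.2.2 ∧
      (∀ i, Metric.closedBall (t.2.1 i) t.2.2 ⊆ V i) ∧
      ∀ v : ι → X, (∀ i, v i ∈ Metric.closedBall (t.2.1 i) t.2.2) → δ₃ < φ t.1 v},
      ∃ s' : {t : ℕ × (ι → X) × ℝ // 0 < t.2.2 ∧
      (∀ i, Metric.closedBall (t.2.1 i) t.2.2 ⊆ V i) ∧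
      ∀ v : ι → X, (∀ i, v i ∈ Metric.closedBall (t.2.1 i) t.2.2) → δ₃ < φ t.1 v},
      s.1.1 < s'.1.1 ∧ ∀ i, Metric.closedBall (s'.1.2.1 i) s'.1.2.2 ⊆
        Metric.closedBall (s.1.2.1 i) s.1.2.2 := by
    rintro ⟨⟨N, z, r⟩, hr, hsub, hφs⟩
    obtain ⟨n, z', r', hn, hr', hsub', hφ'⟩ := step z r hr
      (fun i => Metric.ball_subset_closedBall.trans (hsub i)) N
    exact ⟨⟨⟨n, z', r'⟩, hr',
      fun i => ((hsub' i).trans Metric.ball_subset_closedBall).trans (hsub i), hφ'⟩,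
      hn, fun i => (hsub' i).trans Metric.ball_subset_closedBall⟩
  choose f hf1 hf2 using step'
  set s₀ : {t : ℕ × (ι → X) × ℝ // 0 < t.2.2 ∧
      (∀ i, Metric.closedBall (t.2.1 i) t.2.2 ⊆ V i) ∧
      ∀ v : ι → X, (∀ i, v i ∈ Metric.closedBall (t.2.1 i) t.2.2) → δ₃ < φ t.1 v} :=
    ⟨⟨n₁, z₁, r₁⟩, hr₁, fun i => (hsub₁ i).trans (hz₀V i), hφ₁⟩ with hs₀
  set seq := fun m => f^[m] s₀ with hseqdef
  have hseq : ∀ m, seq (m+1) = f (seq m) := fun m => Function.iterate_succ_apply' f m s₀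
  have mono_n : ∀ m, (seq m).1.1 < (seq (m+1)).1.1 := fun m => by
    rw [hseq m]; exact hf1 (seq m)
  have hsubm : ∀ m i, Metric.closedBall ((seq (m+1)).1.2.1 i) ((seq (m+1)).1.2.2) ⊆
      Metric.closedBall ((seq m).1.2.1 i) ((seq m).1.2.2) := fun m i => by
    rw [hseq m]; exact hf2 (seq m) i
  have hge : ∀ m, m ≤ (seq m).1.1 := by
    intro m
    induction m with
    | zero => exact Nat.zero_le _
    | succ m ih => exact Nat.succ_le_of_lt (lt_of_le_of_lt ih (mono_n m))
  have hy : ∀ i, ∃ p, p ∈ ⋂ m, Metric.closedBall ((seq m).1.2.1 i) ((seq m).1.2.2) := by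
    intro i
    exact IsCompact.nonempty_iInter_of_sequence_nonempty_isCompact_isClosed
      (fun m => Metric.closedBall ((seq m).1.2.1 i) ((seq m).1.2.2))
      (fun m => hsubm m i)
      (fun m => ⟨_, Metric.mem_closedBall_self (le_of_lt (seq m).2.1)⟩)
      Metric.isClosed_closedBall.isCompact
      (fun m => Metric.isClosed_closedBall)
  choose y hy using hy
  refine ⟨y, fun i => (seq 0).2.2.1 i (Set.mem_iInter.1 (hy i) 0), ?_⟩
  have hfreq : ∃ᶠ n in atTop, δ₃ ≤ φ n y := by
    rw [Filter.frequently_atTop]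
    intro N
    exact ⟨(seq N).1.1, hge N,
      le_of_lt ((seq N).2.2.2 y (fun i => Set.mem_iInter.1 (hy i) N))⟩
  have hbdd : Filter.IsBoundedUnder (· ≤ ·) atTop (fun n => φ n y) :=
    Filter.isBoundedUnder_of ⟨C, fun n => hbd n y⟩
  exact lt_of_lt_of_le h1 (Filter.le_limsup_of_frequently_le hfreq hbdd)

end Utils
section Main

variable {X : Type*} [MetricSpace X] [CompactSpace X] [Nontrivial X] {T : X → X}

lemma exists_far {r : ℝ} (h : r < diam (Set.univ : Set X)) (h0 : 0 ≤ r) :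
    ∃ a b : X, r < dist a b := by
  by_contra hc
  push_neg at hc
  exact absurd (diam_le_of_forall_dist_le h0 (fun x _ y _ => hc x y)) (not_le.2 h)

lemma diam_pos : 0 < diam (Set.univ : Set X) := by
  obtain ⟨a, b, hab⟩ := exists_pair_ne X
  exact lt_of_lt_of_le (dist_pos.2 hab)
    (dist_le_diam_of_mem isCompact_univ.isBounded (Set.mem_univ _) (Set.mem_univ _))

lemma minDist_nonneg {k : ℕ} (x y : Fin (k+1) → X) (n : ℕ) : 0 ≤ minDist T x y n :=
  Finset.le_inf' _ _ fun _ _ => dist_nonneg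

lemma minDist_le_diam {k : ℕ} (x y : Fin (k+1) → X) (n : ℕ) :
    minDist T x y n ≤ diam (Set.univ : Set X) :=
  le_trans (Finset.inf'_le _ (Finset.mem_univ 0))
    (dist_le_diam_of_mem isCompact_univ.isBounded (Set.mem_univ _) (Set.mem_univ _))

lemma exists_of_limsup {f : ℕ → ℝ} (h0 : ∀ n, 0 ≤ f n) {δ : ℝ}
    (h : δ < limsup f atTop) : ∃ n, δ < f n := by
  by_contra hc
  push_neg at hc
  have hb : Filter.IsBoundedUnder (· ≥ ·) atTop f := Filter.isBoundedUnder_of ⟨0, h0⟩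
  exact absurd h (not_lt.2 (Filter.limsup_le_of_le hb.isCoboundedUnder_le
    (Filter.Eventually.of_forall hc)))

lemma MDstep (hTc : Continuous T) (hTs : Function.Surjective T) (hwm : WeaklyMixing T)
    {δ : ℝ} (h0 : 0 ≤ δ) (h1 : δ < diam (Set.univ : Set X))
    {ι : Type*} [Fintype ι] (W₁ W₂ : ι → Set X) (hW₁ : ∀ i, Opene (W₁ i))
    (hW₂ : ∀ i, Opene (W₂ i)) (N : ℕ) :
    ∃ n : ℕ, N < n ∧ ∃ x y : ι → X, (∀ i, x i ∈ W₁ i ∧ y i ∈ W₂ i) ∧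
      ∀ i, δ < dist (T^[n] (x i)) (T^[n] (y i)) := by
  set D := diam (Set.univ : Set X) with hD
  set η := (D - δ) / 3 with hη
  have hηpos : 0 < η := by rw [hη]; linarith
  obtain ⟨a, b, hab⟩ := exists_far (show D - η < D by linarith) (by linarith)
  obtain ⟨n, hn, hmt⟩ := mtIdx hTc hTs hwm (ι := ι × Bool)
    (fun j => cond j.2 (W₁ j.1) (W₂ j.1)) (fun j => Metric.ball (cond j.2 a b) η)
    (fun j => by rcases j with ⟨i, _ | _⟩ <;> [exact hW₂ i; exact hW₁ i])
    (fun j => ⟨Metric.isOpen_ball, ⟨_, Metric.mem_ball_self hηpos⟩⟩) N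
  choose g hg using hmt
  refine ⟨n, hn, fun i => g (i, true), fun i => g (i, false),
    fun i => ⟨(hg (i, true)).1, (hg (i, false)).1⟩, fun i => ?_⟩
  show δ < dist (T^[n] (g (i, true))) (T^[n] (g (i, false)))
  have ha : dist (T^[n] (g (i, true))) a < η := Metric.mem_ball.1 (hg (i, true)).2
  have hb : dist (T^[n] (g (i, false))) b < η := Metric.mem_ball.1 (hg (i, false)).2
  have htri : dist a b ≤ dist a (T^[n] (g (i, true))) +
      dist (T^[n] (g (i, true))) (T^[n] (g (i, false))) +
      dist (T^[n] (g (i, false))) b := dist_triangle4 _ _ _ _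
  have hc1 : dist a (T^[n] (g (i, true))) = dist (T^[n] (g (i, true))) a := dist_comm _ _
  linarith

lemma SMR_quarter (hTc : Continuous T) (hTs : Function.Surjective T) (hwm : WeaklyMixing T)
    (k : ℕ) (x : Fin (k + 1) → X) (U : Fin (k + 1) → Set X)
    (hU : ∀ i, IsOpen (U i) ∧ x i ∈ U i) :
    ∃ y : Fin (k + 1) → X, (∀ i, y i ∈ U i) ∧
      ∃ n : ℕ, diam (Set.univ : Set X) / 4 < minDist T x y n := by
  set D := diam (Set.univ : Set X) with hDdef
  have hD : 0 < D := diam_pos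
  obtain ⟨a, b, hab⟩ := exists_far (show 3*D/4 < D by linarith) (by linarith)
  obtain ⟨n, _, hmt⟩ := mtIdx hTc hTs hwm (ι := Fin (k+1) × Bool)
    (fun j => U j.1) (fun j => Metric.ball (cond j.2 a b) (D/16))
    (fun j => ⟨(hU j.1).1, ⟨x j.1, (hU j.1).2⟩⟩)
    (fun j => ⟨Metric.isOpen_ball, ⟨_, Metric.mem_ball_self (by linarith)⟩⟩) 0
  choose g hg using hmt
  refine ⟨fun i => if 3*D/8 < dist (T^[n] (x i)) a then g (i, true) else g (i, false),
    fun i => ?_, n, ?_⟩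
  · show (if 3*D/8 < dist (T^[n] (x i)) a then g (i, true) else g (i, false)) ∈ U i
    split_ifs
    · exact (hg (i, true)).1
    · exact (hg (i, false)).1
  · simp only [minDist, Finset.lt_inf'_iff]
    intro i _
    show D/4 < dist (T^[n] (x i))
      (T^[n] (if 3*D/8 < dist (T^[n] (x i)) a then g (i, true) else g (i, false)))
    split_ifs with h
    · have ha : dist (T^[n] (g (i, true))) a < D/16 := Metric.mem_ball.1 (hg (i, true)).2
      have htri : dist (T^[n] (x i)) a ≤ dist (T^[n] (x i)) (T^[n] (g (i, true))) +
          dist (T^[n] (g (i, true))) a := dist_triangle _ _ _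
      linarith
    · push_neg at h
      have hb : dist (T^[n] (g (i, false))) b < D/16 := Metric.mem_ball.1 (hg (i, false)).2
      have htri1 : dist a b ≤ dist a (T^[n] (x i)) + dist (T^[n] (x i)) b :=
        dist_triangle _ _ _
      have htri2 : dist (T^[n] (x i)) b ≤ dist (T^[n] (x i)) (T^[n] (g (i, false))) +
          dist (T^[n] (g (i, false))) b := dist_triangle _ _ _
      have hc2 : dist a (T^[n] (x i)) = dist (T^[n] (x i)) a := dist_comm _ _
      linarith

lemma bridgeMR (hTc : Continuous T) (hTs : Function.Surjective T) (hwm : WeaklyMixing T)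
    {δ : ℝ}
    (hδ : ∀ (k : ℕ) (x : Fin (k + 1) → X) (U : Fin (k + 1) → Set X),
      (∀ i, IsOpen (U i) ∧ x i ∈ U i) →
      ∃ y : Fin (k + 1) → X, (∀ i, y i ∈ U i) ∧ ∃ n : ℕ, δ < minDist T x y n)
    {δ' : ℝ} (h1 : δ' < δ)
    (k : ℕ) (x : Fin (k + 1) → X) (U : Fin (k + 1) → Set X)
    (hU : ∀ i, IsOpen (U i) ∧ x i ∈ U i) :
    ∃ y : Fin (k + 1) → X, (∀ i, y i ∈ U i) ∧
      δ' < limsup (fun n : ℕ => minDist T x y n) atTop := by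
  set e := (δ - δ') / 4 with he
  have hepos : 0 < e := by rw [he]; linarith
  obtain ⟨M, hM⟩ := unif hTc hδ (show δ - e < δ by linarith) k
  obtain ⟨η, hηpos, hmod⟩ := modulus hTc M hepos
  obtain ⟨F, hF⟩ := net_exists (X := X) (show 0 < η/2 by linarith)
  refine nest (fun n y => minDist T x y n) U
    (fun i => ⟨(hU i).1, ⟨x i, (hU i).2⟩⟩)
    (δ₃ := δ - 3*e) (δ₂ := δ - 2*e) (C := diam (Set.univ : Set X))
    (by linarith) (by linarith) ?_ (fun n v => minDist_le_diam x v n) ?_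
  · -- hloc
    intro n z hz
    simp only [minDist, Finset.lt_inf'_iff] at hz
    have hc : ∀ i, ∃ r > 0, ∀ u : X, dist u (z i) < r →
        dist (T^[n] u) (T^[n] (z i)) < e := by
      intro i
      obtain ⟨r, hr, hrp⟩ := Metric.continuous_iff.1 (hTc.iterate n) (z i) e hepos
      exact ⟨r, hr, fun u hu => hrp u hu⟩
    choose r hr hrp using hc
    have hinf : 0 < Finset.univ.inf' Finset.univ_nonempty r :=
      (Finset.lt_inf'_iff _).2 fun i _ => hr i
    refine ⟨(Finset.univ.inf' Finset.univ_nonempty r)/2, by linarith, fun v hv => ?_⟩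
    simp only [minDist, Finset.lt_inf'_iff]
    intro i _
    have h5 : dist (T^[n] (v i)) (T^[n] (z i)) < e := by
      refine hrp i (v i) (lt_of_le_of_lt (Metric.mem_closedBall.1 (hv i)) ?_)
      have hle : Finset.univ.inf' Finset.univ_nonempty r ≤ r i :=
        Finset.inf'_le r (Finset.mem_univ i)
      linarith
    have h6 := hz i (Finset.mem_univ i)
    have htri : dist (T^[n] (x i)) (T^[n] (z i)) ≤ dist (T^[n] (x i)) (T^[n] (v i)) +
        dist (T^[n] (v i)) (T^[n] (z i)) := dist_triangle _ _ _
    linarith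
  · -- hQ
    intro W hW N
    obtain ⟨n₀, hn₀, hmt⟩ := mtIdx hTc hTs hwm (ι := Fin (k+1) × {c : X // c ∈ F})
      (fun j => W j.1) (fun j => Metric.ball (j.2 : X) (η/2))
      (fun j => (hW j.1).1)
      (fun j => ⟨Metric.isOpen_ball, ⟨_, Metric.mem_ball_self (by linarith)⟩⟩) N
    choose g hg using hmt
    obtain ⟨y, m, hmM, hy⟩ := hM (fun i => T^[n₀] (x i))
    have hci : ∀ i, ∃ c ∈ F, dist (y i) c < η/2 := fun i => hF (y i)
    choose c hcF hcd using hci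
    refine ⟨m + n₀, by omega, fun i => g (i, ⟨c i, hcF i⟩),
      fun i => (hg (i, ⟨c i, hcF i⟩)).1, ?_⟩
    simp only [minDist, Finset.lt_inf'_iff]
    intro i _
    have h7 : dist (T^[n₀] (g (i, ⟨c i, hcF i⟩))) (y i) < η := by
      have hgb : dist (T^[n₀] (g (i, ⟨c i, hcF i⟩))) (c i) < η/2 :=
        Metric.mem_ball.1 (hg (i, ⟨c i, hcF i⟩)).2
      have htri : dist (T^[n₀] (g (i, ⟨c i, hcF i⟩))) (y i) ≤
          dist (T^[n₀] (g (i, ⟨c i, hcF i⟩))) (c i) + dist (c i) (y i) :=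
        dist_triangle _ _ _
      rw [dist_comm (c i)] at htri
      have hcdi := hcd i
      linarith
    have h8 : dist (T^[m] (T^[n₀] (g (i, ⟨c i, hcF i⟩)))) (T^[m] (y i)) < e :=
      hmod m hmM _ _ h7
    have h9 : δ - e < dist (T^[m] (T^[n₀] (x i))) (T^[m] (y i)) := hy i
    rw [Function.iterate_add_apply T m n₀ (x i), Function.iterate_add_apply T m n₀ _]
    have htri : dist (T^[m] (T^[n₀] (x i))) (T^[m] (y i)) ≤
        dist (T^[m] (T^[n₀] (x i))) (T^[m] (T^[n₀] (g (i, ⟨c i, hcF i⟩)))) +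
        dist (T^[m] (T^[n₀] (g (i, ⟨c i, hcF i⟩)))) (T^[m] (y i)) := dist_triangle _ _ _
    linarith

end Main
section Final

variable {X : Type*} [MetricSpace X] [CompactSpace X] [Nontrivial X] {T : X → X}

lemma SMDbar_mem (hTc : Continuous T) (hTs : Function.Surjective T) (hwm : WeaklyMixing T)
    {δ : ℝ} (h0 : 0 ≤ δ) (h1 : δ < diam (Set.univ : Set X))
    (k : ℕ) (U : Fin (k+1) → Set X) (hU : ∀ i, Opene (U i)) :
    ∃ x y : Fin (k + 1) → X, (∀ i, x i ∈ U i ∧ y i ∈ U i) ∧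
      δ < limsup (fun n : ℕ => minDist T x y n) atTop := by
  set D := diam (Set.univ : Set X) with hDdef
  set e := (D - δ)/2 with he
  have hepos : 0 < e := by rw [he]; linarith
  set φ : ℕ → (Fin (k+1) × Bool → X) → ℝ := fun n w => Finset.univ.inf' Finset.univ_nonempty
    (fun i : Fin (k+1) => dist (T^[n] (w (i, true))) (T^[n] (w (i, false)))) with hφ
  have hbd : ∀ (n : ℕ) (v : Fin (k+1) × Bool → X), φ n v ≤ D :=
    fun n v => le_trans (Finset.inf'_le _ (Finset.mem_univ 0))
      (dist_le_diam_of_mem isCompact_univ.isBounded (Set.mem_univ _) (Set.mem_univ _))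
  have hloc : ∀ (n : ℕ) (z : Fin (k+1) × Bool → X), δ + e < φ n z →
      ∃ r > 0, ∀ v : Fin (k+1) × Bool → X,
        (∀ j, v j ∈ Metric.closedBall (z j) r) → δ + e/2 < φ n v := by
    intro n z hz
    simp only [hφ, Finset.lt_inf'_iff] at hz
    have hc : ∀ j : Fin (k+1) × Bool, ∃ r > 0, ∀ u : X, dist u (z j) < r →
        dist (T^[n] u) (T^[n] (z j)) < e/4 := by
      intro j
      obtain ⟨r, hr, hrp⟩ := Metric.continuous_iff.1 (hTc.iterate n) (z j) (e/4) (by linarith)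
      exact ⟨r, hr, fun u hu => hrp u hu⟩
    choose r hr hrp using hc
    have hinf : 0 < Finset.univ.inf' Finset.univ_nonempty r :=
      (Finset.lt_inf'_iff _).2 fun j _ => hr j
    refine ⟨(Finset.univ.inf' Finset.univ_nonempty r)/2, by linarith, fun v hv => ?_⟩
    refine (Finset.lt_inf'_iff _).2 fun i _ => ?_
    have hsmall : ∀ j : Fin (k+1) × Bool,
        dist (T^[n] (v j)) (T^[n] (z j)) < e/4 := by
      intro j
      refine hrp j (v j) (lt_of_le_of_lt (Metric.mem_closedBall.1 (hv j)) ?_)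
      have hle : Finset.univ.inf' Finset.univ_nonempty r ≤ r j :=
        Finset.inf'_le r (Finset.mem_univ j)
      linarith
    have h5 := hsmall (i, true)
    have h6 := hsmall (i, false)
    have h7 := hz i (Finset.mem_univ i)
    have htri : dist (T^[n] (z (i, true))) (T^[n] (z (i, false))) ≤
        dist (T^[n] (z (i, true))) (T^[n] (v (i, true))) +
        dist (T^[n] (v (i, true))) (T^[n] (v (i, false))) +
        dist (T^[n] (v (i, false))) (T^[n] (z (i, false))) := dist_triangle4 _ _ _ _
    have hc1 : dist (T^[n] (z (i, true))) (T^[n] (v (i, true))) =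
        dist (T^[n] (v (i, true))) (T^[n] (z (i, true))) := dist_comm _ _
    linarith
  have hQ : ∀ W : (Fin (k+1) × Bool) → Set X, (∀ j, Opene (W j) ∧ W j ⊆ U j.1) →
      ∀ N : ℕ, ∃ n : ℕ, N < n ∧ ∃ z : Fin (k+1) × Bool → X,
        (∀ j, z j ∈ W j) ∧ δ + e < φ n z := by
    intro W hW N
    obtain ⟨n, hn, xx, yy, hmem, hd⟩ := MDstep hTc hTs hwm
      (show (0:ℝ) ≤ δ + e by linarith) (show δ + e < D by rw [he]; linarith)
      (fun i => W (i, true)) (fun i => W (i, false))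
      (fun i => (hW (i, true)).1) (fun i => (hW (i, false)).1) N
    refine ⟨n, hn, fun j => cond j.2 (xx j.1) (yy j.1), ?_, ?_⟩
    · rintro ⟨i, b⟩
      cases b
      · exact (hmem i).2
      · exact (hmem i).1
    · exact (Finset.lt_inf'_iff _).2 fun i _ => hd i
  obtain ⟨w, hw, hl⟩ := nest φ (fun j => U j.1) (fun j => hU j.1)
    (show δ < δ + e/2 by linarith) (show δ + e/2 < δ + e by linarith) hloc hbd hQ
  exact ⟨fun i => w (i, true), fun i => w (i, false),
    fun i => ⟨hw (i, true), hw (i, false)⟩, hl⟩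

lemma sSup_eq_diam {S : Set ℝ} (hub : ∀ δ ∈ S, δ ≤ diam (Set.univ : Set X))
    (hmem : ∀ δ : ℝ, 0 < δ → δ < diam (Set.univ : Set X) → δ ∈ S) :
    sSup S = diam (Set.univ : Set X) := by
  have hD : 0 < diam (Set.univ : Set X) := diam_pos
  have hbdd : BddAbove S := ⟨_, hub⟩
  refine le_antisymm (csSup_le ⟨diam (Set.univ : Set X)/2,
    hmem _ (by linarith) (by linarith)⟩ hub) ?_
  refine le_of_forall_lt fun c hc => ?_
  obtain ⟨δ, hδ1, hδ2⟩ := exists_between (max_lt hc hD)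
  exact lt_of_le_of_lt (le_max_left c 0) (lt_of_lt_of_le hδ1
    (le_csSup hbdd (hmem δ (lt_of_le_of_lt (le_max_right c 0) hδ1) hδ2)))

lemma glue2 {S T' : Set ℝ} (hTS : T' ⊆ S)
    (hub : ∀ δ ∈ S, δ ≤ diam (Set.univ : Set X))
    (hSpos : ∀ δ ∈ S, 0 < δ)
    (hbridge : ∀ δ ∈ S, ∀ δ' : ℝ, 0 < δ' → δ' < δ → δ' ∈ T')
    {δ₀ : ℝ} (h₀ : 0 < δ₀) (hmem : δ₀ ∈ S) :
    sSup S = sSup T' ∧ 0 < sSup S := by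
  have hbddS : BddAbove S := ⟨_, hub⟩
  have hbddT : BddAbove T' := hbddS.mono hTS
  have hTne : δ₀/2 ∈ T' := hbridge δ₀ hmem (δ₀/2) (by linarith) (by linarith)
  have hge : sSup T' ≤ sSup S := csSup_le_csSup hbddS ⟨δ₀/2, hTne⟩ hTS
  have hle : sSup S ≤ sSup T' := by
    refine csSup_le ⟨δ₀, hmem⟩ fun δ hδ => ?_
    refine le_of_forall_lt fun c hc => ?_
    obtain ⟨δ'', h1, h2⟩ := exists_between (max_lt hc (hSpos δ hδ))
    exact lt_of_le_of_lt (le_max_left c 0) (lt_of_lt_of_le h1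
      (le_csSup hbddT (hbridge δ hδ δ'' (lt_of_le_of_lt (le_max_right c 0) h1) h2)))
  exact ⟨le_antisymm hle hge, lt_of_lt_of_le h₀ (le_csSup hbddS hmem)⟩

end Final

/-- For a nontrivial weakly mixing system,
`𝕃_{m,d} = 𝕃̄_{m,d} = diam X` and `𝕃_{m,r} = 𝕃̄_{m,r} > 0`. -/
theorem stmt15 {X : Type*} [MetricSpace X] [CompactSpace X] [Nontrivial X]
    (hperf : ∀ x : X, (𝓝[≠] x).NeBot)
    {T : X → X} (hTc : Continuous T) (hTs : Function.Surjective T)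
    (hwm : WeaklyMixing T) :
    LyapMD T = diam (Set.univ : Set X) ∧ LyapMDbar T = diam (Set.univ : Set X) ∧
    LyapMR T = LyapMRbar T ∧ 0 < LyapMR T := by
  have hD : 0 < diam (Set.univ : Set X) := diam_pos (X := X)
  have hMR : LyapMR T = LyapMRbar T ∧ 0 < LyapMR T := by
    unfold LyapMR LyapMRbar
    refine glue2 (X := X) ?_ ?_ ?_ ?_ (δ₀ := diam (Set.univ : Set X)/4) (by linarith) ?_
    · rintro δ ⟨h0, hp⟩
      refine ⟨h0, fun k x U hU => ?_⟩
      obtain ⟨y, hy, hl⟩ := hp k x U hU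
      exact ⟨y, hy, exists_of_limsup (fun n => minDist_nonneg x y n) hl⟩
    · rintro δ ⟨h0, hp⟩
      obtain ⟨y, _, n, hn⟩ := hp 0 (fun _ => Classical.arbitrary X) (fun _ => Set.univ)
        (fun _ => ⟨isOpen_univ, Set.mem_univ _⟩)
      exact le_of_lt (lt_of_lt_of_le hn (minDist_le_diam _ y n))
    · rintro δ ⟨h0, _⟩
      exact h0
    · rintro δ ⟨h0, hp⟩ δ' h0' h1'
      exact ⟨h0', bridgeMR hTc hTs hwm hp h1'⟩
    · exact ⟨by linarith, fun k x U hU => SMR_quarter hTc hTs hwm k x U hU⟩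
  refine ⟨?_, ?_, hMR.1, hMR.2⟩
  · unfold LyapMD
    refine sSup_eq_diam ?_ ?_
    · rintro δ ⟨h0, hp⟩
      obtain ⟨x, y, _, n, hn⟩ := hp 0 (fun _ => Set.univ)
        (fun _ => ⟨isOpen_univ, Set.univ_nonempty⟩)
      exact le_of_lt (lt_of_lt_of_le hn (minDist_le_diam x y n))
    · intro δ h0 h1
      refine ⟨h0, fun k U hU => ?_⟩
      obtain ⟨n, _, x, y, hmem, hd⟩ := MDstep hTc hTs hwm (le_of_lt h0) h1 U U hU hU 0
      refine ⟨x, y, hmem, n, ?_⟩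
      simp only [minDist, Finset.lt_inf'_iff]
      exact fun i _ => hd i
  · unfold LyapMDbar
    refine sSup_eq_diam ?_ ?_
    · rintro δ ⟨h0, hp⟩
      obtain ⟨x, y, _, hl⟩ := hp 0 (fun _ => Set.univ)
        (fun _ => ⟨isOpen_univ, Set.univ_nonempty⟩)
      obtain ⟨n, hn⟩ := exists_of_limsup (fun n => minDist_nonneg x y n) hl
      exact le_of_lt (lt_of_lt_of_le hn (minDist_le_diam x y n))
    · intro δ h0 h1
      exact ⟨h0, fun k U hU => SMDbar_mem hTc hTs hwm (le_of_lt h0) h1 k U hU⟩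
end
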